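/- arXiv:1811.06777 — 3 statements merged into one kernel-verified Lean document; each statement's English description precedes it below -/
import Mathlib

section
/- The blob tree of a binary tree-child phylogenetic network has a unique node for each label: no two blob nodes in BT(N) carry the same leaf-descendant set. -/
open scoped Classical
noncomputable section

/-- A (rooted binary phylogenetic) network datum: a finite directed graph on `ℕ`
with an optional leaf-labelling by `α`. -/
structure Net (α : Type) where
  verts : Finset ℕ
  edges : Finset (ℕ × ℕ)
  lab : ℕ → Option α

namespace Net

variable {α β : Type}

def Edge (N : Net α) (u v : ℕ) : Prop := (u, v) ∈ N.edges

def indeg (N : Net α) (v : ℕ) : ℕ := (N.edges.filter fun e => e.2 = v).card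
def outdeg (N : Net α) (v : ℕ) : ℕ := (N.edges.filter fun e => e.1 = v).card

/-- Reachability by directed paths. -/
def Reaches (N : Net α) : ℕ → ℕ → Prop := Relation.ReflTransGen N.Edge

def IsRoot (N : Net α) (v : ℕ) : Prop :=
  v ∈ N.verts ∧ N.indeg v = 0 ∧ N.outdeg v = 1
def IsLeaf (N : Net α) (v : ℕ) : Prop :=
  v ∈ N.verts ∧ N.indeg v = 1 ∧ N.outdeg v = 0
def IsTreeNode (N : Net α) (v : ℕ) : Prop :=
  v ∈ N.verts ∧ N.indeg v = 1 ∧ N.outdeg v = 2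
def IsRetic (N : Net α) (v : ℕ) : Prop :=
  v ∈ N.verts ∧ N.indeg v = 2 ∧ N.outdeg v = 1

/-- `N` is a rooted binary phylogenetic network on leaf set `α`. -/
def IsNetwork (N : Net α) : Prop :=
  (∀ e ∈ N.edges, e.1 ∈ N.verts ∧ e.2 ∈ N.verts) ∧
  (∀ u v, N.Edge u v → ¬ N.Reaches v u) ∧
  (∃! r, N.IsRoot r) ∧
  (∀ v ∈ N.verts, N.IsRoot v ∨ N.IsLeaf v ∨ N.IsTreeNode v ∨ N.IsRetic v) ∧
  (∀ v, (∃ x, N.lab v = some x) ↔ N.IsLeaf v) ∧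
  (∀ x : α, ∃! v, N.lab v = some x)

/-- Tree-child: every non-leaf node has a child that is a tree node or a leaf. -/
def TreeChild (N : Net α) : Prop :=
  N.IsNetwork ∧
  ∀ v ∈ N.verts, ¬ N.IsLeaf v → ∃ c, N.Edge v c ∧ (N.IsTreeNode c ∨ N.IsLeaf c)

def IsReticEdge (N : Net α) (e : ℕ × ℕ) : Prop := e ∈ N.edges ∧ N.IsRetic e.2

def deleteNode (N : Net α) (v : ℕ) : Net α :=
  ⟨N.verts.erase v, N.edges.filter fun e => e.1 ≠ v ∧ e.2 ≠ v, N.lab⟩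

def deleteEdge (N : Net α) (e : ℕ × ℕ) : Net α := ⟨N.verts, N.edges.erase e, N.lab⟩

def deleteEdges (N : Net α) (E : Finset (ℕ × ℕ)) : Net α := ⟨N.verts, N.edges \ E, N.lab⟩

/-- One step of cleaning up: delete an unlabelled outdegree-0 node, or suppress an
indegree-1 outdegree-1 node.  (In this simple-digraph encoding the parallel-edge rule
is subsumed: the inserted edge merges with an existing one, and the endpoints are then
suppressed by further steps.) -/
inductive CleanStep {α : Type} : Net α → Net α → Prop
  | delNode (N : Net α) (v : ℕ) (hv : v ∈ N.verts) (h0 : N.outdeg v = 0)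
      (hlab : N.lab v = none) : CleanStep N (N.deleteNode v)
  | suppress (N : Net α) (u v w : ℕ) (h1 : N.indeg v = 1) (h2 : N.outdeg v = 1)
      (hu : N.Edge u v) (hw : N.Edge v w) :
      CleanStep N ⟨N.verts.erase v,
        insert (u, w) (N.edges.filter fun e => e.1 ≠ v ∧ e.2 ≠ v), N.lab⟩

/-- `N` cleans up to `M`: apply clean-up steps until none applies. -/
def CleansTo (N M : Net α) : Prop :=
  Relation.ReflTransGen CleanStep N M ∧ ∀ M', ¬ CleanStep M M'

/-- Maximum subnetwork: delete one reticulation edge and clean up. -/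
def IsMaxSubnet (N M : Net α) : Prop :=
  ∃ e, N.IsReticEdge e ∧ CleansTo (N.deleteEdge e) M

/-- A reticulation edge is valid if deleting it and cleaning up removes exactly
2 nodes and 3 edges. -/
def ValidEdge (N : Net α) (e : ℕ × ℕ) : Prop :=
  N.IsReticEdge e ∧
  ∀ M, CleansTo (N.deleteEdge e) M →
    M.verts.card + 2 = N.verts.card ∧ M.edges.card + 3 = N.edges.card

/-- A valid network: all reticulation edges are valid. -/
def Valid (N : Net α) : Prop :=
  N.IsNetwork ∧ ∀ e, N.IsReticEdge e → N.ValidEdge e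

def Subgraph (M N : Net α) : Prop :=
  M.verts ⊆ N.verts ∧ M.edges ⊆ N.edges ∧ ∀ v ∈ M.verts, M.lab v = N.lab v

/-- One edge-subdivision step. -/
inductive SubdivStep {α : Type} : Net α → Net α → Prop
  | mk (N : Net α) (u v w : ℕ) (he : N.Edge u v) (hw : w ∉ N.verts) :
      SubdivStep N ⟨insert w N.verts,
        insert (u, w) (insert (w, v) (N.edges.erase (u, v))), N.lab⟩

/-- `M` is a subdivision of `N`. -/
def Subdivision (N M : Net α) : Prop := Relation.ReflTransGen SubdivStep N M

/-- Isomorphism of networks (preserving leaf labels). -/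
def Iso (N M : Net α) : Prop :=
  ∃ f : ℕ → ℕ, Set.BijOn f ↑N.verts ↑M.verts ∧
    (∀ u ∈ N.verts, ∀ v ∈ N.verts, (N.Edge u v ↔ M.Edge (f u) (f v))) ∧
    ∀ v ∈ N.verts, N.lab v = M.lab (f v)

/-- `N` displays `M`: some subgraph of `N` is (isomorphic to) a subdivision of `M`. -/
def Displays (N M : Net α) : Prop :=
  ∃ S M', Subgraph S N ∧ Subdivision M M' ∧ Iso M' S

/-- Leaf-descendant (label) set of a node. -/
def descSet (N : Net α) (v : ℕ) : Set α :=
  {x | ∃ l, N.lab l = some x ∧ N.Reaches v l}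

def Adj (N : Net α) (u v : ℕ) : Prop := N.Edge u v ∨ N.Edge v u

def ConnectedIn (N : Net α) (S : Finset ℕ) (u v : ℕ) : Prop :=
  Relation.ReflTransGen (fun a b => a ∈ S ∧ b ∈ S ∧ N.Adj a b) u v

/-- A biconnected vertex set: at least 3 nodes, connected, and no cut-node. -/
def BiconnectedSet (N : Net α) (S : Finset ℕ) : Prop :=
  3 ≤ S.card ∧ S ⊆ N.verts ∧
  (∀ u ∈ S, ∀ v ∈ S, N.ConnectedIn S u v) ∧
  ∀ c ∈ S, ∀ u ∈ S.erase c, ∀ v ∈ S.erase c, N.ConnectedIn (S.erase c) u v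

/-- A biconnected component: a maximal biconnected set. -/
def BlobSet (N : Net α) (S : Finset ℕ) : Prop :=
  N.BiconnectedSet S ∧ ∀ T, N.BiconnectedSet T → S ⊆ T → S = T

/-- A blob: either a biconnected component, or a tree node in no biconnected component. -/
def IsBlob (N : Net α) (S : Finset ℕ) : Prop :=
  N.BlobSet S ∨ ∃ t, S = {t} ∧ N.IsTreeNode t ∧ ∀ T, N.BlobSet T → t ∉ T

/-- The top node of a blob: the node of the blob from which all its nodes are reachable. -/
def TopNode (N : Net α) (S : Finset ℕ) (v : ℕ) : Prop :=
  v ∈ S ∧ ∀ u ∈ S, N.Reaches v u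

/-- The blob tree of `N` contains a blob node labelled `A`. -/
def HasBlobNode (N : Net α) (A : Set α) : Prop :=
  ∃ S v, N.IsBlob S ∧ N.TopNode S v ∧ N.descSet v = A

/-- The blob tree of `N` has an edge from blob node `A` to blob node `B`. -/
def BTEdge (N : Net α) (A B : Set α) : Prop :=
  ∃ S T u v, N.IsBlob S ∧ N.IsBlob T ∧ S ≠ T ∧ N.TopNode S u ∧ N.TopNode T v ∧
    N.descSet u = A ∧ N.descSet v = B ∧ ∃ w ∈ S, N.Edge w v

def reticCount (N : Net α) (S : Finset ℕ) : ℕ := (S.filter fun v => N.IsRetic v).card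

/-- `N` is a level-`k` network. -/
def IsLevel (N : Net α) (k : ℕ) : Prop :=
  (∀ S, N.BiconnectedSet S → N.reticCount S ≤ k) ∧
  (k = 0 ∨ ∃ S, N.BiconnectedSet S ∧ N.reticCount S = k)

/-- `M` is a maximum lower-level subnetwork (MLLS) of the level-`k` network `N`:
obtained by deleting exactly one valid reticulation edge from every level-`k`
biconnected component and cleaning up. -/
def IsMLLS (N : Net α) (k : ℕ) (M : Net α) : Prop :=
  ∃ E : Finset (ℕ × ℕ),
    (∀ e ∈ E, N.ValidEdge e) ∧
    (∀ S, N.BlobSet S → N.reticCount S = k → ∃! e, e ∈ E ∧ e.1 ∈ S ∧ e.2 ∈ S) ∧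
    (∀ e ∈ E, ∃ S, N.BlobSet S ∧ N.reticCount S = k ∧ e.1 ∈ S ∧ e.2 ∈ S) ∧
    CleansTo (N.deleteEdges E) M

/-- A cherry on two leaves. -/
def Cherry (N : Net α) (x y : ℕ) : Prop :=
  N.IsLeaf x ∧ N.IsLeaf y ∧ x ≠ y ∧ ∃ p, N.Edge p x ∧ N.Edge p y

/-- A reticulated cherry on two leaves, with the reticulation on `y`. -/
def RetCherry (N : Net α) (x y : ℕ) : Prop :=
  N.IsLeaf x ∧ N.IsLeaf y ∧
  ∃ p r, N.IsRetic r ∧ N.Edge r y ∧ N.Edge p x ∧ N.Edge p r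

/-- A reticulated cherry shape on non-reticulation nodes `x, y` with nodes
`px, py, gy` and edges `(px,x), (px,py), (gy,py), (py,y)`, `py` a reticulation. -/
def RetCherryShape (N : Net α) (x y px py gy : ℕ) : Prop :=
  ¬ N.IsRetic x ∧ ¬ N.IsRetic y ∧ N.IsRetic py ∧ px ≠ gy ∧
  N.Edge px x ∧ N.Edge px py ∧ N.Edge gy py ∧ N.Edge py y

def DirPath (N : Net α) (l : List ℕ) : Prop := l ≠ [] ∧ l.Chain' N.Edge

/-- `l` is the node sequence of an up-down path from `x` to `y`: a directed path from
an apex down to `x`, reversed, followed by a directed path from the apex down to `y`. -/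
def IsUpDownPath (N : Net α) (x y : ℕ) (l : List ℕ) : Prop :=
  ∃ p q : List ℕ, N.DirPath p ∧ N.DirPath q ∧ p.head? = q.head? ∧
    p.getLast? = some x ∧ q.getLast? = some y ∧ l = p.reverse ++ q.tail

/-- `n` is the shortest up-down distance between `x` and `y` (an up-down path with `n`
edges has `n+1` nodes). -/
def IsUpDownDist (N : Net α) (x y n : ℕ) : Prop :=
  (∃ l, N.IsUpDownPath x y l ∧ l.length = n + 1) ∧
  ∀ l, N.IsUpDownPath x y l → n + 1 ≤ l.length

def relabel (N : Net α) (f : α → β) : Net β :=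
  ⟨N.verts, N.edges, fun v => (N.lab v).map f⟩

/-- Collapse the pendant subnetwork rooted at `y` to a single leaf labelled `A`. -/
def collapseAt (N : Net α) (y : ℕ) (A : α) : Net α :=
  ⟨N.verts.filter (fun v => v = y ∨ ¬ N.Reaches y v),
   N.edges.filter (fun e => ¬ N.Reaches y e.1),
   fun v => if v = y then some A else N.lab v⟩

/-- Leaf-descendant set for networks whose leaves are labelled by sets of taxa. -/
def descUnion (N : Net (Set α)) (v : ℕ) : Set α :=
  {x | ∃ l s, N.lab l = some s ∧ x ∈ s ∧ N.Reaches v l}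

def HasBlobNodeU (N : Net (Set α)) (A : Set α) : Prop :=
  ∃ S v, N.IsBlob S ∧ N.TopNode S v ∧ N.descUnion v = A

/-- `M` is a subnetwork of `N`: displayed by `N` and not `N` itself. -/
def Subnet (N M : Net α) : Prop := M.IsNetwork ∧ N.Displays M ∧ ¬ N.Iso M

/-- Equality of sets of networks up to isomorphism. -/
def SetEquiv (S T : Set (Net α)) : Prop :=
  ∀ M, (∃ M₁ ∈ S, Iso M M₁) ↔ ∃ M₂ ∈ T, Iso M M₂

/-- The subnetworks of `N` of level at most `k - 1`. -/
def lowerSubnets (N : Net α) (k : ℕ) : Set (Net α) :=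
  {M | N.Subnet M ∧ ∃ j < k, M.IsLevel j}

/-- The set of all MLLSs of `N`. -/
def mllsSet (N : Net α) : Set (Net α) :=
  {M | ∃ k, N.IsLevel k ∧ N.IsMLLS k M}

end Net

namespace NetAux
open Net

variable {X : Type}

lemma reach_antisymm (N : Net X) (hA : ∀ u v, N.Edge u v → ¬ N.Reaches v u)
    {u v : ℕ} (huv : N.Reaches u v) : N.Reaches v u → u = v := by
  have huv' : Relation.ReflTransGen N.Edge u v := huv
  induction huv' with
  | refl => exact fun _ => rfl
  | tail h₁ h₂ _ => exact fun hvu => absurd (Relation.ReflTransGen.trans hvu h₁) (hA _ _ h₂)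

lemma edge_verts (N : Net X) (hE : ∀ e ∈ N.edges, e.1 ∈ N.verts ∧ e.2 ∈ N.verts)
    {u v : ℕ} (h : N.Edge u v) : u ∈ N.verts ∧ v ∈ N.verts := hE (u, v) h

lemma parent_unique (N : Net X) {v a b : ℕ} (h1 : N.indeg v = 1)
    (ha : N.Edge a v) (hb : N.Edge b v) : a = b := by
  have h1' : (N.edges.filter fun e => e.2 = v).card = 1 := h1
  have h := Finset.card_le_one.mp (le_of_eq h1') (a, v)
      (Finset.mem_filter.mpr ⟨ha, rfl⟩) (b, v) (Finset.mem_filter.mpr ⟨hb, rfl⟩)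
  exact congrArg Prod.fst h

lemma children_exist (N : Net X) {v : ℕ} (h2 : N.outdeg v = 2) :
    ∃ a b, a ≠ b ∧ N.Edge v a ∧ N.Edge v b := by
  have h2' : (N.edges.filter fun e => e.1 = v).card = 2 := h2
  have h2'' : 1 < (N.edges.filter fun e => e.1 = v).card := by omega
  obtain ⟨e, he, f, hf, hef⟩ := Finset.one_lt_card.mp h2''
  obtain ⟨he1, he2⟩ := Finset.mem_filter.mp he
  obtain ⟨hf1, hf2⟩ := Finset.mem_filter.mp hf
  refine ⟨e.2, f.2, ?_, ?_, ?_⟩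
  · intro h
    exact hef (Prod.ext_iff.mpr ⟨he2.trans hf2.symm, h⟩)
  · show (v, e.2) ∈ N.edges
    rw [← he2]; simpa using he1
  · show (v, f.2) ∈ N.edges
    rw [← hf2]; simpa using hf1

lemma child_unique (N : Net X) {v a b c : ℕ} (h2 : N.outdeg v = 2) (hab : a ≠ b)
    (ha : N.Edge v a) (hb : N.Edge v b) (hc : N.Edge v c) : c = a ∨ c = b := by
  by_contra hcon
  push_neg at hcon
  have h2' : (N.edges.filter fun e => e.1 = v).card = 2 := h2
  have hsub : ({(v,a),(v,b),(v,c)} : Finset (ℕ × ℕ)) ⊆ N.edges.filter fun e => e.1 = v := by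
    intro e he
    simp only [Finset.mem_insert, Finset.mem_singleton] at he
    rcases he with rfl | rfl | rfl
    · exact Finset.mem_filter.mpr ⟨ha, rfl⟩
    · exact Finset.mem_filter.mpr ⟨hb, rfl⟩
    · exact Finset.mem_filter.mpr ⟨hc, rfl⟩
  have hac : a ≠ c := fun h => hcon.1 h.symm
  have hbc : b ≠ c := fun h => hcon.2 h.symm
  have hcard : ({(v,a),(v,b),(v,c)} : Finset (ℕ × ℕ)).card = 3 := by
    rw [Finset.card_insert_of_notMem (by simp [hab, hac]),
        Finset.card_insert_of_notMem (by simp [hbc]), Finset.card_singleton]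
  have := Finset.card_le_card hsub
  omega

lemma chain_head_reaches (N : Net X) :
    ∀ {p : List ℕ}, p.Chain' N.Edge → ∀ {h : ℕ}, p.head? = some h →
      ∀ {x : ℕ}, x ∈ p → N.Reaches h x := by
  intro p
  induction p with
  | nil => intro _ h hh; simp at hh
  | cons a t ih =>
    intro hc h hh x hx
    obtain rfl : a = h := by simpa using hh
    rcases List.mem_cons.mp hx with rfl | hx
    · exact Relation.ReflTransGen.refl
    · cases t with
      | nil => simp at hx
      | cons b t' =>
        obtain ⟨hab, hc'⟩ := List.isChain_cons_cons.mp hc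
        exact Relation.ReflTransGen.trans (Relation.ReflTransGen.single hab) (ih hc' rfl hx)

lemma chain_reaches_last (N : Net X) :
    ∀ {p : List ℕ}, p.Chain' N.Edge → ∀ {l : ℕ}, p.getLast? = some l →
      ∀ {x : ℕ}, x ∈ p → N.Reaches x l := by
  intro p
  induction p with
  | nil => intro _ l hl; simp at hl
  | cons a t ih =>
    intro hc l hl x hx
    cases t with
    | nil =>
      obtain rfl : a = l := by simpa using hl
      obtain rfl : x = a := by simpa using hx
      exact Relation.ReflTransGen.refl
    | cons b t' =>
      rw [List.getLast?_cons_cons] at hl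
      obtain ⟨hab, hc'⟩ := List.isChain_cons_cons.mp hc
      rcases List.mem_cons.mp hx with rfl | hx
      · exact Relation.ReflTransGen.trans (Relation.ReflTransGen.single hab)
          (ih hc' hl (List.mem_cons_self))
      · exact ih hc' hl hx

lemma chain_nodup (N : Net X) (hA : ∀ u v, N.Edge u v → ¬ N.Reaches v u) :
    ∀ {p : List ℕ}, p.Chain' N.Edge → p.Nodup := by
  intro p
  induction p with
  | nil => exact fun _ => List.nodup_nil
  | cons a t ih =>
    intro hc
    refine List.nodup_cons.mpr ⟨?_, ih hc.tail⟩
    intro hat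
    cases t with
    | nil => simp at hat
    | cons b t' =>
      obtain ⟨hab, hc'⟩ := List.isChain_cons_cons.mp hc
      exact hA a b hab (chain_head_reaches N hc' rfl hat)

lemma chain_mem_verts (N : Net X) (hE : ∀ e ∈ N.edges, e.1 ∈ N.verts ∧ e.2 ∈ N.verts) :
    ∀ {p : List ℕ}, p.Chain' N.Edge → 2 ≤ p.length → ∀ x ∈ p, x ∈ N.verts := by
  intro p
  induction p with
  | nil => intro _ h; simp at h
  | cons a t ih =>
    intro hc hlen x hx
    cases t with
    | nil => simp at hlen
    | cons b t' =>
      obtain ⟨hab, hc'⟩ := List.isChain_cons_cons.mp hc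
      rcases List.mem_cons.mp hx with rfl | hx
      · exact (edge_verts N hE hab).1
      · cases t' with
        | nil =>
          obtain rfl : x = b := by simpa using hx
          exact (edge_verts N hE hab).2
        | cons c t'' => exact ih hc' (by simp) x hx

lemma chain_pred {R : ℕ → ℕ → Prop} :
    ∀ {t : List ℕ} {h : ℕ}, (h :: t).Chain' R → ∀ {x : ℕ}, x ∈ t →
      t.head? = some x ∨ ∃ y ∈ t, R y x := by
  intro t
  induction t with
  | nil => intro h _ x hx; simp at hx
  | cons c t' ih =>
    intro h hc x hx
    obtain ⟨hhc, hc'⟩ := List.isChain_cons_cons.mp hc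
    rcases List.mem_cons.mp hx with rfl | hx
    · exact Or.inl rfl
    · rcases ih hc' hx with h1 | ⟨y, hy, hyx⟩
      · cases t' with
        | nil => simp at h1
        | cons d t'' =>
          obtain rfl : d = x := by simpa using h1
          obtain ⟨hcd, _⟩ := List.isChain_cons_cons.mp hc'
          exact Or.inr ⟨c, List.mem_cons_self, hcd⟩
      · exact Or.inr ⟨y, List.mem_cons_of_mem _ hy, hyx⟩

lemma reaches_chain (N : Net X) {u v : ℕ} (h : N.Reaches u v) :
    ∃ p : List ℕ, p.Chain' N.Edge ∧ p.head? = some u ∧ p.getLast? = some v := by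
  have h' : Relation.ReflTransGen N.Edge u v := h
  clear h
  induction h' with
  | refl => exact ⟨[u], List.isChain_singleton u, rfl, rfl⟩
  | @tail b c h₁ h₂ ih =>
    obtain ⟨p, hc, hh, hl⟩ := ih
    have hpne : p ≠ [] := by intro h0; rw [h0] at hh; simp at hh
    refine ⟨p ++ [c], ?_, ?_, List.getLast?_concat⟩
    · simp only [List.Chain', List.isChain_append]
      refine ⟨hc, List.isChain_singleton c, ?_⟩
      intro x hx y hy
      rw [hl] at hx
      obtain rfl : b = x := by simpa using hx
      obtain rfl : c = y := by simpa using hy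
      exact h₂
    · rw [List.head?_append_of_ne_nil _ hpne]; exact hh

/-- A tree path from `v` down to a leaf: all nodes after `v` have indegree 1. -/
def TP (N : Net X) (v : ℕ) (p : List ℕ) : Prop :=
  p.Chain' N.Edge ∧ p.head? = some v ∧ (∀ x ∈ p.tail, N.indeg x = 1) ∧
  ∃ l, p.getLast? = some l ∧ N.IsLeaf l

lemma tp_exists_aux (N : Net X) (hN : N.TreeChild) :
    ∀ n (v : ℕ), v ∈ N.verts → (N.verts.filter fun w => N.Reaches v w).card ≤ n →
      ∃ p, TP N v p := by
  intro n
  induction n with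
  | zero =>
    intro v hv hle
    exfalso
    have hm : v ∈ N.verts.filter fun w => N.Reaches v w :=
      Finset.mem_filter.mpr ⟨hv, Relation.ReflTransGen.refl⟩
    have := Finset.card_pos.mpr ⟨v, hm⟩
    omega
  | succ n ih =>
    intro v hv hle
    by_cases hleaf : N.IsLeaf v
    · exact ⟨[v], List.isChain_singleton v, rfl, by simp, v, rfl, hleaf⟩
    · obtain ⟨c, hvc, hc⟩ := hN.2 v hv hleaf
      have hA := hN.1.2.1
      have hcv : c ∈ N.verts := (edge_verts N hN.1.1 hvc).2
      have hindeg : N.indeg c = 1 := by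
        rcases hc with h | h
        · exact h.2.1
        · exact h.2.1
      have hlt : (N.verts.filter fun w => N.Reaches c w).card
          < (N.verts.filter fun w => N.Reaches v w).card := by
        apply Finset.card_lt_card
        constructor
        · intro w hw
          obtain ⟨hw1, hw2⟩ := Finset.mem_filter.mp hw
          exact Finset.mem_filter.mpr
            ⟨hw1, Relation.ReflTransGen.trans (Relation.ReflTransGen.single hvc) hw2⟩
        · intro hsub
          have hvmem : v ∈ N.verts.filter fun w => N.Reaches v w :=
            Finset.mem_filter.mpr ⟨hv, Relation.ReflTransGen.refl⟩
          have := Finset.mem_filter.mp (hsub hvmem)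
          exact hA v c hvc this.2
      obtain ⟨q, hq1, hq2, hq3, l, hq4, hq5⟩ := ih c hcv (by omega)
      refine ⟨v :: q, ?_, rfl, ?_, l, ?_, hq5⟩
      · simp only [List.Chain', List.isChain_cons]
        constructor
        · intro y hy
          rw [hq2] at hy
          obtain rfl : c = y := by simpa using hy
          exact hvc
        · exact hq1
      · intro x hx
        cases q with
        | nil => simp at hq2
        | cons a t =>
          obtain rfl : a = c := by simpa using hq2
          rcases List.mem_cons.mp hx with rfl | hx'
          · exact hindeg
          · exact hq3 x hx'
      · cases q with
        | nil => simp at hq2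
        | cons a t => rw [List.getLast?_cons_cons]; exact hq4

lemma tp_exists (N : Net X) (hN : N.TreeChild) {v : ℕ} (hv : v ∈ N.verts) :
    ∃ p, TP N v p :=
  tp_exists_aux N hN _ v hv le_rfl

lemma tp_reach (N : Net X) (hA : ∀ u v, N.Edge u v → ¬ N.Reaches v u)
    {v : ℕ} {p : List ℕ} (htp : TP N v p) {x w : ℕ} (hx : x ∈ p) (hw : N.Reaches w x) :
    N.Reaches w v ∨ w ∈ p := by
  obtain ⟨hch, hh, htail, -⟩ := htp
  obtain ⟨t, rfl⟩ : ∃ t, p = v :: t := by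
    cases p with
    | nil => simp at hh
    | cons a t =>
      refine ⟨t, ?_⟩
      have hav : a = v := by simpa using hh
      rw [hav]
  have hw' : Relation.ReflTransGen N.Edge w x := hw
  clear hw
  revert hx
  induction hw' with
  | refl => exact fun hx => Or.inr hx
  | @tail b c h₁ h₂ ih =>
    intro hcmem
    rcases List.mem_cons.mp hcmem with heq | hct
    · exact Or.inl (heq ▸ Relation.ReflTransGen.tail h₁ h₂)
    · have hind : N.indeg c = 1 := htail c hct
      rcases chain_pred hch hct with hhead | ⟨y, hy, hyc⟩
      · have hvc : N.Edge v c := by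
          cases t with
          | nil => simp at hhead
          | cons d t' =>
            have hdc : d = c := by simpa using hhead
            rw [← hdc]
            exact (List.isChain_cons_cons.mp hch).1
        have hbv : b = v := parent_unique N hind h₂ hvc
        exact ih (by rw [hbv]; exact List.mem_cons_self)
      · have hby : b = y := parent_unique N hind h₂ hyc
        exact ih (by rw [hby]; exact List.mem_cons_of_mem _ hy)

lemma connIn_symm (N : Net X) {S : Finset ℕ} {u v : ℕ} (h : N.ConnectedIn S u v) :
    N.ConnectedIn S v u :=
  letI : Std.Symm (fun a b : ℕ => a ∈ S ∧ b ∈ S ∧ N.Adj a b) :=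
    ⟨fun _ _ hab => ⟨hab.2.1, hab.1, Or.symm hab.2.2⟩⟩
  Std.Symm.symm (r := Relation.ReflTransGen (fun a b : ℕ => a ∈ S ∧ b ∈ S ∧ N.Adj a b)) u v h

lemma connIn_mono (N : Net X) {S T : Finset ℕ} (hST : S ⊆ T) {u v : ℕ}
    (h : N.ConnectedIn S u v) : N.ConnectedIn T u v :=
  Relation.ReflTransGen.mono (r := fun a b => a ∈ S ∧ b ∈ S ∧ N.Adj a b)
    (p := fun a b => a ∈ T ∧ b ∈ T ∧ N.Adj a b) (fun _ _ hab => ⟨hST hab.1, hST hab.2.1, hab.2.2⟩) _ _ h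

lemma conn_chain_head (N : Net X) {S : Finset ℕ} :
    ∀ {p : List ℕ}, p.Chain' N.Adj → (∀ x ∈ p, x ∈ S) → ∀ {h : ℕ}, p.head? = some h →
      ∀ {x : ℕ}, x ∈ p → N.ConnectedIn S h x := by
  intro p
  induction p with
  | nil => intro _ _ h hh; simp at hh
  | cons a t ih =>
    intro hc hm h hh x hx
    obtain rfl : a = h := by simpa using hh
    rcases List.mem_cons.mp hx with rfl | hx
    · exact Relation.ReflTransGen.refl
    · cases t with
      | nil => simp at hx
      | cons b t' =>
        obtain ⟨hab, hc'⟩ := List.isChain_cons_cons.mp hc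
        have step : N.ConnectedIn S a b :=
          Relation.ReflTransGen.single ⟨hm a (by simp), hm b (by simp), hab⟩
        exact Relation.ReflTransGen.trans step
          (ih hc' (fun y hy => hm y (List.mem_cons_of_mem _ hy)) rfl hx)

lemma conn_chain (N : Net X) {S : Finset ℕ} {p : List ℕ} (hc : p.Chain' N.Adj)
    (hm : ∀ x ∈ p, x ∈ S) {x y : ℕ} (hx : x ∈ p) (hy : y ∈ p) : N.ConnectedIn S x y := by
  cases p with
  | nil => simp at hx
  | cons a t =>
    exact Relation.ReflTransGen.trans (connIn_symm N (conn_chain_head N hc hm rfl hx))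
      (conn_chain_head N hc hm rfl hy)

lemma cycle_biconn (N : Net X) (L : List ℕ) (hnd : L.Nodup) (hch : L.Chain' N.Adj)
    (hwrap : ∀ x y, L.head? = some x → L.getLast? = some y → N.Adj y x)
    (hcard : 3 ≤ L.toFinset.card) (hverts : ∀ x ∈ L, x ∈ N.verts) :
    N.BiconnectedSet L.toFinset := by
  refine ⟨hcard, fun x hx => hverts x (List.mem_toFinset.mp hx), ?_, ?_⟩
  · intro u hu v hv
    exact conn_chain N hch (fun x hx => List.mem_toFinset.mpr hx)
      (List.mem_toFinset.mp hu) (List.mem_toFinset.mp hv)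
  · intro c hc u hu v hv
    obtain ⟨L₁, L₂, hLeq⟩ := List.append_of_mem (List.mem_toFinset.mp hc)
    subst hLeq
    rw [List.nodup_append] at hnd
    obtain ⟨hnd1, hnd2, hdisj⟩ := hnd
    have hcL1 : c ∉ L₁ := fun h => hdisj c h c List.mem_cons_self rfl
    have hcL2 : c ∉ L₂ := (List.nodup_cons.mp hnd2).1
    simp only [List.Chain', List.isChain_append] at hch
    obtain ⟨hch1, hch2, hjun⟩ := hch
    have hch2' : L₂.Chain' N.Adj := hch2.tail
    have hMmem : ∀ x ∈ L₂ ++ L₁, x ∈ (L₁ ++ c :: L₂).toFinset.erase c := by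
      intro x hx
      rcases List.mem_append.mp hx with hx | hx
      · exact Finset.mem_erase.mpr ⟨fun h => hcL2 (h ▸ hx),
          List.mem_toFinset.mpr (List.mem_append.mpr (Or.inr (List.mem_cons_of_mem _ hx)))⟩
      · exact Finset.mem_erase.mpr ⟨fun h => hcL1 (h ▸ hx),
          List.mem_toFinset.mpr (List.mem_append.mpr (Or.inl hx))⟩
    have hchM : (L₂ ++ L₁).Chain' N.Adj := by
      simp only [List.Chain', List.isChain_append]
      refine ⟨hch2', hch1, ?_⟩
      intro x hx y hy
      apply hwrap y x
      · have hL1ne : L₁ ≠ [] := by intro h; rw [h] at hy; simp at hy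
        rw [List.head?_append_of_ne_nil _ hL1ne]; exact hy
      · have hL2ne : L₂ ≠ [] := by intro h; rw [h] at hx; simp at hx
        rw [List.getLast?_append_of_ne_nil _ (by simp : (c :: L₂) ≠ [])]
        cases L₂ with
        | nil => exact absurd rfl hL2ne
        | cons d t => rw [List.getLast?_cons_cons]; exact hx
    have hmem' : ∀ w, w ∈ (L₁ ++ c :: L₂).toFinset.erase c → w ∈ L₂ ++ L₁ := by
      intro w hw
      obtain ⟨hwne, hwmem⟩ := Finset.mem_erase.mp hw
      rcases List.mem_append.mp (List.mem_toFinset.mp hwmem) with h | h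
      · exact List.mem_append.mpr (Or.inr h)
      · rcases List.mem_cons.mp h with rfl | h
        · exact absurd rfl hwne
        · exact List.mem_append.mpr (Or.inl h)
    exact conn_chain N hchM hMmem (hmem' u hu) (hmem' v hv)

lemma biconn_union (N : Net X) {S T : Finset ℕ} (hS : N.BiconnectedSet S)
    (hT : N.BiconnectedSet T) {x y : ℕ} (hxS : x ∈ S) (hxT : x ∈ T) (hyS : y ∈ S)
    (hyT : y ∈ T) (hxy : x ≠ y) : N.BiconnectedSet (S ∪ T) := by
  obtain ⟨hSc, hSv, hSconn, hScut⟩ := hS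
  obtain ⟨hTc, hTv, hTconn, hTcut⟩ := hT
  have hcutS : ∀ c, ∀ u ∈ S.erase c, ∀ v ∈ S.erase c, N.ConnectedIn (S.erase c) u v := by
    intro c u hu v hv
    by_cases hcS : c ∈ S
    · exact hScut c hcS u hu v hv
    · rw [Finset.erase_eq_of_notMem hcS] at hu hv ⊢
      exact hSconn u hu v hv
  have hcutT : ∀ c, ∀ u ∈ T.erase c, ∀ v ∈ T.erase c, N.ConnectedIn (T.erase c) u v := by
    intro c u hu v hv
    by_cases hcT : c ∈ T
    · exact hTcut c hcT u hu v hv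
    · rw [Finset.erase_eq_of_notMem hcT] at hu hv ⊢
      exact hTconn u hu v hv
  refine ⟨le_trans hSc (Finset.card_le_card Finset.subset_union_left), ?_, ?_, ?_⟩
  · intro z hz
    rcases Finset.mem_union.mp hz with h | h
    · exact hSv h
    · exact hTv h
  · intro u hu v hv
    have key : ∀ w ∈ S ∪ T, N.ConnectedIn (S ∪ T) w x := by
      intro w hw
      rcases Finset.mem_union.mp hw with h | h
      · exact connIn_mono N Finset.subset_union_left (hSconn w h x hxS)
      · exact connIn_mono N Finset.subset_union_right (hTconn w h x hxT)
    exact Relation.ReflTransGen.trans (key u hu) (connIn_symm N (key v hv))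
  · intro c _ u hu v hv
    set z := if x = c then y else x with hz
    have hzS : z ∈ S := by rw [hz]; split_ifs <;> assumption
    have hzT : z ∈ T := by rw [hz]; split_ifs <;> assumption
    have hzc : z ≠ c := by
      rw [hz]; split_ifs with h
      · exact fun hyc => hxy (h.trans hyc.symm)
      · exact h
    have hkey : ∀ w ∈ (S ∪ T).erase c, N.ConnectedIn ((S ∪ T).erase c) w z := by
      intro w hw
      obtain ⟨hwc, hwST⟩ := Finset.mem_erase.mp hw
      rcases Finset.mem_union.mp hwST with h | h
      · exact connIn_mono N (Finset.erase_subset_erase c Finset.subset_union_left)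
          (hcutS c w (Finset.mem_erase.mpr ⟨hwc, h⟩) z (Finset.mem_erase.mpr ⟨hzc, hzS⟩))
      · exact connIn_mono N (Finset.erase_subset_erase c Finset.subset_union_right)
          (hcutT c w (Finset.mem_erase.mpr ⟨hwc, h⟩) z (Finset.mem_erase.mpr ⟨hzc, hzT⟩))
    exact Relation.ReflTransGen.trans (hkey u hu) (connIn_symm N (hkey v hv))

lemma exists_blobset (N : Net X) {C : Finset ℕ} (hC : N.BiconnectedSet C) :
    ∃ T, N.BlobSet T ∧ C ⊆ T := by
  have hne : (N.verts.powerset.filter fun T => N.BiconnectedSet T ∧ C ⊆ T).Nonempty :=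
    ⟨C, Finset.mem_filter.mpr ⟨Finset.mem_powerset.mpr hC.2.1, hC, Finset.Subset.refl C⟩⟩
  obtain ⟨T, hT, hmax⟩ := Finset.exists_max_image _ Finset.card hne
  obtain ⟨hTp, hTb, hCT⟩ := Finset.mem_filter.mp hT
  refine ⟨T, ⟨hTb, ?_⟩, hCT⟩
  intro T' hT'b hsub
  exact Finset.eq_of_subset_of_card_le hsub (hmax T' (Finset.mem_filter.mpr
    ⟨Finset.mem_powerset.mpr hT'b.2.1, hT'b, hCT.trans hsub⟩))

lemma two_neighbors (N : Net X) (hA : ∀ u v, N.Edge u v → ¬ N.Reaches v u)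
    {S : Finset ℕ} {v : ℕ} (hS : N.BiconnectedSet S) (hv : v ∈ S) :
    ∃ a b, a ≠ b ∧ a ∈ S ∧ b ∈ S ∧ N.Adj v a ∧ N.Adj v b := by
  obtain ⟨hc3, hSv, hconn, hcut⟩ := hS
  obtain ⟨u, hu, hune⟩ := Finset.exists_mem_ne (show 1 < S.card by omega) v
  rcases Relation.ReflTransGen.cases_head (hconn v hv u hu) with heq | ⟨w, hw, -⟩
  · exact absurd heq.symm hune
  obtain ⟨-, hwS, hvw⟩ := hw
  have hvw_ne : v ≠ w := by
    intro h; subst h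
    rcases hvw with h | h
    · exact hA _ _ h Relation.ReflTransGen.refl
    · exact hA _ _ h Relation.ReflTransGen.refl
  have hc2 : 1 < (S.erase w).card := by
    rw [Finset.card_erase_of_mem hwS]; omega
  obtain ⟨u', hu', hu'ne⟩ := Finset.exists_mem_ne hc2 v
  have hvmem : v ∈ S.erase w := Finset.mem_erase.mpr ⟨hvw_ne, hv⟩
  rcases Relation.ReflTransGen.cases_head (hcut w hwS v hvmem u' hu') with heq | ⟨w', hw', -⟩
  · exact absurd heq.symm hu'ne
  obtain ⟨-, hw'mem, hvw'⟩ := hw'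
  obtain ⟨hw'ne, hw'S⟩ := Finset.mem_erase.mp hw'mem
  exact ⟨w, w', fun h => hw'ne h.symm, hwS, hw'S, hvw, hvw'⟩

lemma top_children (N : Net X) (hA : ∀ u v, N.Edge u v → ¬ N.Reaches v u)
    {S : Finset ℕ} {v : ℕ} (hS : N.BiconnectedSet S) (ht : N.TopNode S v) :
    ∃ a b, a ≠ b ∧ N.Edge v a ∧ N.Edge v b ∧ a ∈ S ∧ b ∈ S := by
  obtain ⟨a, b, hab, haS, hbS, hva, hvb⟩ := two_neighbors N hA hS ht.1
  have hchild : ∀ w ∈ S, N.Adj v w → N.Edge v w := by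
    intro w hwS hadj
    rcases hadj with h | h
    · exact h
    · exact absurd (ht.2 w hwS) (hA w v h)
  exact ⟨a, b, hab, hchild a haS hva, hchild b hbS hvb, haS, hbS⟩

lemma top_is_tree (N : Net X) (hNet : N.IsNetwork) {S : Finset ℕ} {v : ℕ}
    (hb : N.IsBlob S) (ht : N.TopNode S v) : N.IsTreeNode v := by
  obtain ⟨hE, hA, -, hdeg, -, -⟩ := hNet
  rcases hb with hb | ⟨t, hSt, htree, -⟩
  · obtain ⟨a, b, hab, hva, hvb, -, -⟩ := top_children N hA hb.1 ht
    have hvV : v ∈ N.verts := hb.1.2.1 ht.1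
    have hout : 2 ≤ N.outdeg v := by
      have hsub : ({(v,a),(v,b)} : Finset (ℕ×ℕ)) ⊆ N.edges.filter fun e => e.1 = v := by
        intro e he
        rcases Finset.mem_insert.mp he with rfl | he
        · exact Finset.mem_filter.mpr ⟨hva, rfl⟩
        · obtain rfl := Finset.mem_singleton.mp he
          exact Finset.mem_filter.mpr ⟨hvb, rfl⟩
      have h2 : ({(v,a),(v,b)} : Finset (ℕ×ℕ)).card = 2 := by
        rw [Finset.card_insert_of_notMem (by simp [hab]), Finset.card_singleton]
      calc (2:ℕ) = _ := h2.symm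
        _ ≤ _ := Finset.card_le_card hsub
    rcases hdeg v hvV with h | h | h | h
    · rw [h.2.2] at hout; omega
    · rw [h.2.2] at hout; omega
    · exact h
    · rw [h.2.2] at hout; omega
  · have : v = t := by rw [hSt] at ht; simpa using ht.1
    rw [this]; exact htree

lemma reaches_leaf_of_descSet (N : Net X) (huniq : ∀ x : X, ∃! v, N.lab v = some x)
    {v l : ℕ} {x : X} (hl : N.lab l = some x) (hx : x ∈ N.descSet v) : N.Reaches v l := by
  obtain ⟨l', hl', hr⟩ := hx
  obtain ⟨w, -, hwu⟩ := huniq x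
  have : l' = l := (hwu l' hl').trans (hwu l hl).symm
  rw [← this]; exact hr

lemma key_lemma (N : Net X) (hN : N.TreeChild) {S₁ : Finset ℕ} {v₁ v₂ : ℕ}
    (h₁ : N.IsBlob S₁) (ht₁ : N.TopNode S₁ v₁) (hv₂ : N.IsTreeNode v₂)
    (hd : N.descSet v₁ = N.descSet v₂) (hr : N.Reaches v₂ v₁) (hne : v₁ ≠ v₂) : False := by
  obtain ⟨hNet, htc⟩ := hN
  obtain ⟨hE, hA, hroot, hdeg, hlabiff, hlabuniq⟩ := hNet
  have hNet' : N.IsNetwork := ⟨hE, hA, hroot, hdeg, hlabiff, hlabuniq⟩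
  have hN' : N.TreeChild := ⟨hNet', htc⟩
  have hv₁ : N.IsTreeNode v₁ := top_is_tree N hNet' h₁ ht₁
  -- tree path of v₂
  obtain ⟨p, hp⟩ := tp_exists N hN' hv₂.1
  obtain ⟨hpc, hph, hptail, l, hpl, hleaf⟩ := hp
  have hlmem : l ∈ p := List.mem_of_getLast? hpl
  obtain ⟨x, hxl⟩ := (hlabiff l).mpr hleaf
  have hv₂l : N.Reaches v₂ l := chain_head_reaches N hpc hph hlmem
  have hxd1 : x ∈ N.descSet v₁ := by rw [hd]; exact ⟨l, hxl, hv₂l⟩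
  have hv₁l : N.Reaches v₁ l := reaches_leaf_of_descSet N hlabuniq hxl hxd1
  have hv₁p : v₁ ∈ p := by
    rcases tp_reach N hA ⟨hpc, hph, hptail, l, hpl, hleaf⟩ hlmem hv₁l with h | h
    · exact absurd (reach_antisymm N hA hr h) (Ne.symm hne)
    · exact h
  obtain ⟨t0, rfl⟩ : ∃ t0, p = v₂ :: t0 := by
    cases p with
    | nil => simp at hph
    | cons a t =>
      refine ⟨t, ?_⟩
      have hav : a = v₂ := by simpa using hph
      rw [hav]
  have hv₁t : v₁ ∈ t0 := by
    rcases List.mem_cons.mp hv₁p with h | h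
    · exact absurd h hne
    · exact h
  obtain ⟨u₁, t', rfl⟩ : ∃ u₁ t', t0 = u₁ :: t' := by
    cases t0 with
    | nil => simp at hv₁t
    | cons u₁ t' => exact ⟨u₁, t', rfl⟩
  obtain ⟨hvu₁, hck⟩ := List.isChain_cons_cons.mp hpc
  obtain ⟨a', b', hab', ha', hb'⟩ := children_exist N hv₂.2.2
  have hbex : ∃ b, b ≠ u₁ ∧ N.Edge v₂ b := by
    rcases child_unique N hv₂.2.2 hab' ha' hb' hvu₁ with h | h
    · exact ⟨b', fun hh => hab' ((hh.trans h).symm), hb'⟩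
    · exact ⟨a', fun hh => hab' (hh.trans h), ha'⟩
  obtain ⟨b, hbu, hv₂b⟩ := hbex
  have hpnodup : (v₂ :: u₁ :: t').Nodup := chain_nodup N hA hpc
  have hTP : TP N v₂ (v₂ :: u₁ :: t') := ⟨hpc, rfl, hptail, l, hpl, hleaf⟩
  have hbnp : b ∉ (v₂ :: u₁ :: t') := by
    intro hbp
    rcases List.mem_cons.mp hbp with heq | hbt
    · rw [heq] at hv₂b
      exact hA _ _ hv₂b Relation.ReflTransGen.refl
    · have hbind : N.indeg b = 1 := hptail b hbt
      rcases chain_pred hpc hbt with hh | ⟨y, hy, hyb⟩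
      · have : u₁ = b := by simpa using hh
        exact hbu this.symm
      · have hvy : v₂ = y := parent_unique N hbind hv₂b hyb
        rw [← hvy] at hy
        exact (List.nodup_cons.mp hpnodup).1 hy
  have hbV : b ∈ N.verts := (edge_verts N hE hv₂b).2
  obtain ⟨q, hq⟩ := tp_exists N hN' hbV
  obtain ⟨hqc, hqh, hqtail, lb, hql, hlbleaf⟩ := hq
  have hlbmem : lb ∈ q := List.mem_of_getLast? hql
  obtain ⟨xb, hxbl⟩ := (hlabiff lb).mpr hlbleaf
  have hv₂lb : N.Reaches v₂ lb := Relation.ReflTransGen.trans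
    (Relation.ReflTransGen.single hv₂b) (chain_head_reaches N hqc hqh hlbmem)
  have hxbd : xb ∈ N.descSet v₁ := by rw [hd]; exact ⟨lb, hxbl, hv₂lb⟩
  have hv₁lb : N.Reaches v₁ lb := reaches_leaf_of_descSet N hlabuniq hxbl hxbd
  have hnotbv₁ : ¬ N.Reaches b v₁ := by
    intro hbv₁
    rcases tp_reach N hA hTP hv₁p hbv₁ with h | h
    · exact hA v₂ b hv₂b h
    · exact hbnp h
  have hv₁b : N.Reaches v₁ b := by
    rcases tp_reach N hA ⟨hqc, hqh, hqtail, lb, hql, hlbleaf⟩ hlbmem hv₁lb with h | h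
    · exact h
    · exact absurd (chain_head_reaches N hqc hqh h) hnotbv₁
  have hbv₁ne : b ≠ v₁ := by
    intro h; rw [h] at hnotbv₁; exact hnotbv₁ Relation.ReflTransGen.refl
  -- prefix P of the tree path ending at v₁
  obtain ⟨s, t₂, hsplit⟩ := List.append_of_mem hv₁p
  have hPpre : (s ++ [v₁]) <+: (v₂ :: u₁ :: t') := ⟨t₂, by rw [hsplit]; simp⟩
  have hPchain : (s ++ [v₁]).Chain' N.Edge := hpc.prefix hPpre
  have hPlast : (s ++ [v₁]).getLast? = some v₁ := List.getLast?_concat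
  have hPhead : (s ++ [v₁]).head? = some v₂ := by
    cases s with
    | nil =>
      rw [List.nil_append] at hsplit
      injection hsplit with h1 _
      exact absurd h1.symm hne
    | cons a₀ s' =>
      injection hsplit with h1 _
      simp [h1]
  have hPsub : ∀ z ∈ s ++ [v₁], z ∈ (v₂ :: u₁ :: t') := fun z hz => hPpre.sublist.subset hz
  have hPnodup : (s ++ [v₁]).Nodup := chain_nodup N hA hPchain
  have hPreach : ∀ z ∈ s ++ [v₁], N.Reaches z v₁ :=
    fun z hz => chain_reaches_last N hPchain hPlast hz
  obtain ⟨Q, hQc, hQh, hQl⟩ := reaches_chain N hv₁b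
  have hQnodup : Q.Nodup := chain_nodup N hA hQc
  obtain ⟨tq, rfl⟩ : ∃ tq, Q = v₁ :: tq := by
    cases Q with
    | nil => simp at hQh
    | cons w₀ tq =>
      refine ⟨tq, ?_⟩
      have hav : w₀ = v₁ := by simpa using hQh
      rw [hav]
  have htqne : tq ≠ [] := by
    intro h; subst h
    have : v₁ = b := by simpa using hQl
    exact hbv₁ne this.symm
  have hbtq : b ∈ tq := by
    have hbQ : b ∈ v₁ :: tq := List.mem_of_getLast? hQl
    rcases List.mem_cons.mp hbQ with h | h
    · exact absurd h hbv₁ne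
    · exact h
  have htqlast : tq.getLast? = some b := by
    cases tq with
    | nil => exact absurd rfl htqne
    | cons d td => rw [← List.getLast?_cons_cons (a := v₁)]; exact hQl
  have htqreach : ∀ z ∈ tq, N.Reaches v₁ z :=
    fun z hz => chain_head_reaches N hQc hQh (List.mem_cons_of_mem _ hz)
  have hv₁ntq : v₁ ∉ tq := (List.nodup_cons.mp hQnodup).1
  have hLnodup : ((s ++ [v₁]) ++ tq).Nodup := by
    rw [List.nodup_append]
    refine ⟨hPnodup, (List.nodup_cons.mp hQnodup).2, ?_⟩
    intro z hzP _ hztq rfl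
    have h1 : N.Reaches z v₁ := hPreach z hzP
    have h2 : N.Reaches v₁ z := htqreach z hztq
    have hz : z = v₁ := reach_antisymm N hA h1 h2
    rw [hz] at hztq
    exact hv₁ntq hztq
  have hLchain : ((s ++ [v₁]) ++ tq).Chain' N.Adj := by
    simp only [List.Chain']; rw [List.isChain_append]
    refine ⟨hPchain.imp (fun a b h => Or.inl h), (hQc.tail).imp (fun a b h => Or.inl h), ?_⟩
    intro zx hzx zy hzy
    rw [hPlast] at hzx
    obtain rfl : v₁ = zx := by simpa using hzx
    refine Or.inl ?_
    cases tq with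
    | nil => exact absurd rfl htqne
    | cons d td =>
      obtain rfl : d = zy := by simpa using hzy
      exact (List.isChain_cons_cons.mp hQc).1
  have hPne : (s ++ [v₁]) ≠ [] := by simp
  have hLhead : ((s ++ [v₁]) ++ tq).head? = some v₂ := by
    rw [List.head?_append_of_ne_nil _ hPne]; exact hPhead
  have hLlast : ((s ++ [v₁]) ++ tq).getLast? = some b := by
    rw [List.getLast?_append_of_ne_nil _ htqne]; exact htqlast
  have hwrap : ∀ zx zy, ((s ++ [v₁]) ++ tq).head? = some zx →
      ((s ++ [v₁]) ++ tq).getLast? = some zy → N.Adj zy zx := by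
    intro zx zy hx1 hy1
    rw [hLhead] at hx1
    rw [hLlast] at hy1
    obtain rfl : v₂ = zx := by simpa using hx1
    obtain rfl : b = zy := by simpa using hy1
    exact Or.inr hv₂b
  have hv₂P : v₂ ∈ s ++ [v₁] := List.mem_of_mem_head? (Option.mem_def.mpr hPhead)
  have hv₁P : v₁ ∈ s ++ [v₁] := List.mem_append.mpr (Or.inr (by simp))
  have hv₂b_ne : v₂ ≠ b := by
    intro h; rw [h] at hv₂b; exact hA _ _ hv₂b Relation.ReflTransGen.refl
  have hcard : 3 ≤ ((s ++ [v₁]) ++ tq).toFinset.card := by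
    have hsub : ({v₂, v₁, b} : Finset ℕ) ⊆ ((s ++ [v₁]) ++ tq).toFinset := by
      intro z hz
      simp only [Finset.mem_insert, Finset.mem_singleton] at hz
      rcases hz with rfl | rfl | rfl
      · exact List.mem_toFinset.mpr (List.mem_append.mpr (Or.inl hv₂P))
      · exact List.mem_toFinset.mpr (List.mem_append.mpr (Or.inl hv₁P))
      · exact List.mem_toFinset.mpr (List.mem_append.mpr (Or.inr hbtq))
    have h3 : ({v₂, v₁, b} : Finset ℕ).card = 3 := by
      rw [Finset.card_insert_of_notMem (by simp [Ne.symm hne, hv₂b_ne]),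
          Finset.card_insert_of_notMem (by simp [Ne.symm hbv₁ne]), Finset.card_singleton]
    calc (3:ℕ) = _ := h3.symm
      _ ≤ _ := Finset.card_le_card hsub
  have hLverts : ∀ z ∈ (s ++ [v₁]) ++ tq, z ∈ N.verts := by
    intro z hz
    rcases List.mem_append.mp hz with h | h
    · exact chain_mem_verts N hE hpc (by simp) _ (hPsub z h)
    · cases tq with
      | nil => exact absurd rfl htqne
      | cons d td =>
        exact chain_mem_verts N hE hQc (by simp) _ (List.mem_cons_of_mem _ h)
  have hC : N.BiconnectedSet ((s ++ [v₁]) ++ tq).toFinset :=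
    cycle_biconn N _ hLnodup hLchain hwrap hcard hLverts
  obtain ⟨T, hTblob, hCT⟩ := exists_blobset N hC
  have hv₁T : v₁ ∈ T := hCT (List.mem_toFinset.mpr (List.mem_append.mpr (Or.inl hv₁P)))
  have hv₂T : v₂ ∈ T := hCT (List.mem_toFinset.mpr (List.mem_append.mpr (Or.inl hv₂P)))
  rcases h₁ with h₁b | ⟨t₁, hS₁, -, hnob⟩
  · obtain ⟨a₁, b₁, hab₁, hva₁, hvb₁, ha₁S, hb₁S⟩ := top_children N hA h₁b.1 ht₁
    obtain ⟨n₁, n₂, hn12, hn₁T, hn₂T, hadj₁, hadj₂⟩ := two_neighbors N hA hTblob.1 hv₁T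
    have hchild : ∃ c3, N.Edge v₁ c3 ∧ c3 ∈ T := by
      rcases hadj₁ with h | h
      · exact ⟨n₁, h, hn₁T⟩
      · rcases hadj₂ with h' | h'
        · exact ⟨n₂, h', hn₂T⟩
        · exact absurd (parent_unique N hv₁.2.1 h h') hn12
    obtain ⟨c3, hvc3, hc3T⟩ := hchild
    have hc3S : c3 ∈ S₁ := by
      rcases child_unique N hv₁.2.2 hab₁ hva₁ hvb₁ hvc3 with rfl | rfl
      · exact ha₁S
      · exact hb₁S
    have hc3ne : v₁ ≠ c3 := by
      intro h; rw [← h] at hvc3; exact hA _ _ hvc3 Relation.ReflTransGen.refl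
    have hunion : N.BiconnectedSet (S₁ ∪ T) :=
      biconn_union N h₁b.1 hTblob.1 ht₁.1 hv₁T hc3S hc3T hc3ne
    have hequnion := h₁b.2 (S₁ ∪ T) hunion Finset.subset_union_left
    have hv₂S₁ : v₂ ∈ S₁ := by rw [hequnion]; exact Finset.mem_union_right _ hv₂T
    exact hne (reach_antisymm N hA (ht₁.2 v₂ hv₂S₁) hr)
  · have hvt : v₁ = t₁ := by rw [hS₁] at ht₁; simpa using ht₁.1
    exact hnob T hTblob (by rw [← hvt]; exact hv₁T)

end NetAux

/-- In the blob tree of a binary tree-child network, no two blob nodes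
carry the same leaf-descendant set: two blobs with equally-labelled top nodes coincide. -/
theorem blobTree_labels_unique {X : Type} (N : Net X) (hN : N.TreeChild)
    (S₁ S₂ : Finset ℕ) (v₁ v₂ : ℕ)
    (h₁ : N.IsBlob S₁) (h₂ : N.IsBlob S₂)
    (ht₁ : N.TopNode S₁ v₁) (ht₂ : N.TopNode S₂ v₂)
    (hd : N.descSet v₁ = N.descSet v₂) : S₁ = S₂ := by
  obtain ⟨hNet, htc⟩ := hN
  obtain ⟨hE, hA, hroot, hdeg, hlabiff, hlabuniq⟩ := hNet
  have hNet' : N.IsNetwork := ⟨hE, hA, hroot, hdeg, hlabiff, hlabuniq⟩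
  have hN' : N.TreeChild := ⟨hNet', htc⟩
  have hv₁ : N.IsTreeNode v₁ := NetAux.top_is_tree N hNet' h₁ ht₁
  have hv₂ : N.IsTreeNode v₂ := NetAux.top_is_tree N hNet' h₂ ht₂
  by_cases hvv : v₁ = v₂
  · subst hvv
    rcases h₁ with h₁b | ⟨t₁, hS₁, -, hnob₁⟩
    · rcases h₂ with h₂b | ⟨t₂, hS₂, -, hnob₂⟩
      · obtain ⟨a₁, b₁, hab₁, hva₁, hvb₁, ha₁S, hb₁S⟩ := NetAux.top_children N hA h₁b.1 ht₁
        obtain ⟨a₂, b₂, hab₂, hva₂, hvb₂, ha₂S, hb₂S⟩ := NetAux.top_children N hA h₂b.1 ht₂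
        have ha₁S₂ : a₁ ∈ S₂ := by
          rcases NetAux.child_unique N hv₁.2.2 hab₂ hva₂ hvb₂ hva₁ with rfl | rfl
          · exact ha₂S
          · exact hb₂S
        have hb₁S₂ : b₁ ∈ S₂ := by
          rcases NetAux.child_unique N hv₁.2.2 hab₂ hva₂ hvb₂ hvb₁ with rfl | rfl
          · exact ha₂S
          · exact hb₂S
        have hu := NetAux.biconn_union N h₁b.1 h₂b.1 ha₁S ha₁S₂ hb₁S hb₁S₂ hab₁
        have e1 := h₁b.2 _ hu Finset.subset_union_left
        have e2 := h₂b.2 _ hu Finset.subset_union_right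
        exact e1.trans e2.symm
      · have hvt₂ : v₁ = t₂ := by rw [hS₂] at ht₂; simpa using ht₂.1
        exact (hnob₂ S₁ h₁b (by rw [← hvt₂]; exact ht₁.1)).elim
    · rcases h₂ with h₂b | ⟨t₂, hS₂, -, hnob₂⟩
      · have hvt₁ : v₁ = t₁ := by rw [hS₁] at ht₁; simpa using ht₁.1
        exact (hnob₁ S₂ h₂b (by rw [← hvt₁]; exact ht₂.1)).elim
      · have hvt₁ : v₁ = t₁ := by rw [hS₁] at ht₁; simpa using ht₁.1
        have hvt₂ : v₁ = t₂ := by rw [hS₂] at ht₂; simpa using ht₂.1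
        rw [hS₁, hS₂, ← hvt₁, ← hvt₂]
  · obtain ⟨p, hpc, hph, hptail, l, hpl, hleaf⟩ := NetAux.tp_exists N hN' hv₁.1
    have hlmem : l ∈ p := List.mem_of_getLast? hpl
    obtain ⟨x, hxl⟩ := (hlabiff l).mpr hleaf
    have h1 : N.Reaches v₁ l := NetAux.chain_head_reaches N hpc hph hlmem
    have hx2 : x ∈ N.descSet v₂ := by rw [← hd]; exact ⟨l, hxl, h1⟩
    have h2 : N.Reaches v₂ l := NetAux.reaches_leaf_of_descSet N hlabuniq hxl hx2
    rcases NetAux.tp_reach N hA ⟨hpc, hph, hptail, l, hpl, hleaf⟩ hlmem h2 with h | h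
    · exact (NetAux.key_lemma N hN' h₁ ht₁ hv₂ hd h hvv).elim
    · have h' : N.Reaches v₁ v₂ := NetAux.chain_head_reaches N hpc hph h
      exact (NetAux.key_lemma N hN' h₂ ht₂ hv₁ hd.symm h' (Ne.symm hvv)).elim
end
end

section
/- In a binary tree-child phylogenetic network, deleting a single reticulation edge (and cleaning up) can decrease the shortest up-down distance between any pair of leaves by at most one. -/
open scoped Classical
noncomputable section

/-! ### Auxiliary list lemmas -/

section ListAux

variable {R : ℕ → ℕ → Prop}

lemma aux_head?_append_left (A B : List ℕ) (h : A ≠ []) : (A ++ B).head? = A.head? := by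
  cases A with
  | nil => simp at h
  | cons a t => rfl

lemma aux_getLast?_append_right (A B : List ℕ) (h : B ≠ []) :
    (A ++ B).getLast? = B.getLast? := by
  rw [List.getLast?_append]
  cases B with
  | nil => simp at h
  | cons b t => simp [List.getLast?_cons]

lemma aux_chain_reach : ∀ (t : List ℕ) (h z : ℕ), List.Chain' R (h :: t) → z ∈ h :: t →
    Relation.ReflTransGen R h z := by
  intro t
  induction t with
  | nil =>
    intro h z _ hz
    simp only [List.mem_singleton] at hz
    subst hz; exact .refl
  | cons w t ih =>
    intro h z hc hz
    rcases List.mem_cons.mp hz with rfl | hz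
    · exact .refl
    · replace hc := List.isChain_cons_cons.mp hc
      exact (Relation.ReflTransGen.single hc.1).trans (ih w z hc.2 hz)

lemma aux_chain_nodup (hac : ∀ v w, R v w → ¬ Relation.ReflTransGen R w v) :
    ∀ s : List ℕ, List.Chain' R s → s.Nodup := by
  intro s
  induction s with
  | nil => simp
  | cons v t ih =>
    intro hc
    refine List.nodup_cons.mpr ⟨?_, ih hc.tail⟩
    intro hv
    cases t with
    | nil => simp at hv
    | cons w t' =>
      replace hc := List.isChain_cons_cons.mp hc
      exact hac v w hc.1 (aux_chain_reach t' w v hc.2 hv)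

lemma aux_chain_succ : ∀ s : List ℕ, List.Chain' R s → ∀ z ∈ s,
    (∃ z', R z z') ∨ s.getLast? = some z := by
  intro s
  induction s with
  | nil => intro _ z hz; simp at hz
  | cons v t ih =>
    intro hc z hz
    cases t with
    | nil =>
      simp only [List.mem_singleton] at hz
      subst hz; right; rfl
    | cons w t' =>
      rcases List.mem_cons.mp hz with rfl | hz
      · replace hc := List.isChain_cons_cons.mp hc
        exact Or.inl ⟨w, hc.1⟩
      · rcases ih hc.tail z hz with h | h
        · exact Or.inl h
        · right
          rw [List.getLast?_cons_cons]; exact h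

lemma aux_rtg_mono {S : ℕ → ℕ → Prop}
    (h : ∀ x y, S x y → Relation.ReflTransGen R x y) :
    ∀ x y, Relation.ReflTransGen S x y → Relation.ReflTransGen R x y := by
  intro x y hxy
  induction hxy with
  | refl => exact .refl
  | tail _ h2 ih => exact ih.trans (h _ _ h2)

end ListAux

/-! ### Local configuration around a deleted reticulation edge -/

structure Cfg (X : Type) where
  N : Net X
  u : ℕ
  r : ℕ
  p : ℕ
  c : ℕ
  a : ℕ
  b : ℕ
  hur : N.Edge u r
  hpr : N.Edge p r
  hrc : N.Edge r c
  hau : N.Edge a u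
  hub : N.Edge u b
  hinr : ∀ z, N.Edge z r → z = u ∨ z = p
  houtr : ∀ z, N.Edge r z → z = c
  hinu : ∀ z, N.Edge z u → z = a
  houtu : ∀ z, N.Edge u z → z = r ∨ z = b
  hinb : ∀ z, N.Edge z b → z = u
  hinc : ∀ z, N.Edge z c → z = r
  hpu : p ≠ u
  hacyc : ∀ v w, N.Edge v w → ¬ N.Reaches w v
  closure : ∀ e ∈ N.edges, e.1 ∈ N.verts ∧ e.2 ∈ N.verts
  types : ∀ v ∈ N.verts, N.IsRoot v ∨ N.IsLeaf v ∨ N.IsTreeNode v ∨ N.IsRetic v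
  lableaf : ∀ v, (∃ x, N.lab v = some x) ↔ N.IsLeaf v

namespace Cfg

variable {X : Type} (C : Cfg X)

lemma ne_of_edge {v w : ℕ} (h : C.N.Edge v w) : v ≠ w := by
  rintro rfl
  exact C.hacyc v v h .refl

lemma ne_of_edge2 {v w z : ℕ} (h1 : C.N.Edge v w) (h2 : C.N.Edge w z) : v ≠ z := by
  rintro rfl
  exact C.hacyc w v h2 (Relation.ReflTransGen.single h1)

lemma hru : C.r ≠ C.u := (C.ne_of_edge C.hur).symm
lemma hau_ne : C.a ≠ C.u := C.ne_of_edge C.hau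
lemma har : C.a ≠ C.r := C.ne_of_edge2 C.hau C.hur
lemma hbu : C.b ≠ C.u := (C.ne_of_edge C.hub).symm
lemma hbr : C.b ≠ C.r := by
  intro h
  exact C.hpu (C.hinb C.p (h ▸ C.hpr))
lemma hcu : C.c ≠ C.u := by
  intro h
  exact C.hacyc C.u C.r C.hur (Relation.ReflTransGen.single (h ▸ C.hrc))
lemma hcr : C.c ≠ C.r := (C.ne_of_edge C.hrc).symm
lemma hpr_ne : C.p ≠ C.r := C.ne_of_edge C.hpr
lemma hpc : C.p ≠ C.c := by
  intro h
  exact C.hacyc C.r C.c C.hrc (Relation.ReflTransGen.single (h ▸ C.hpr))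
lemma hab : C.a ≠ C.b := by
  intro h
  exact C.hacyc C.u C.b C.hub (Relation.ReflTransGen.single (h ▸ C.hau))
lemma hac : C.a ≠ C.c := by
  intro h
  exact C.hacyc C.u C.r C.hur
    ((Relation.ReflTransGen.single (h ▸ C.hrc : C.N.Edge C.r C.a)).trans
      (Relation.ReflTransGen.single C.hau))
lemma hbc : C.b ≠ C.c := by
  intro h
  exact C.hru (C.hinc C.u (h ▸ C.hub)).symm
lemma hab_not_edge : ¬ C.N.Edge C.a C.b := by
  intro h
  exact C.hau_ne (C.hinb C.a h)
lemma hpc_not_edge : ¬ C.N.Edge C.p C.c := by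
  intro h
  exact C.hpr_ne (C.hinc C.p h)

/-- The network after deleting the reticulation edge `(u,r)`. -/
def M0 : Net X := C.N.deleteEdge (C.u, C.r)
/-- …after additionally suppressing `r`. -/
def M1 : Net X :=
  ⟨C.N.verts.erase C.r,
    insert (C.p, C.c) (C.M0.edges.filter fun e => e.1 ≠ C.r ∧ e.2 ≠ C.r), C.N.lab⟩
/-- …after suppressing `u` (first). -/
def M2 : Net X :=
  ⟨C.N.verts.erase C.u,
    insert (C.a, C.b) (C.M0.edges.filter fun e => e.1 ≠ C.u ∧ e.2 ≠ C.u), C.N.lab⟩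
/-- …after suppressing both `r` and `u`. -/
def M3 : Net X :=
  ⟨(C.N.verts.erase C.r).erase C.u,
    insert (C.a, C.b) (C.M1.edges.filter fun e => e.1 ≠ C.u ∧ e.2 ≠ C.u), C.N.lab⟩

lemma mem_M0 (e : ℕ × ℕ) : e ∈ C.M0.edges ↔ e ∈ C.N.edges ∧ e ≠ (C.u, C.r) := by
  simp only [M0, Net.deleteEdge, Finset.mem_erase]; tauto

lemma mem_M1 (e : ℕ × ℕ) : e ∈ C.M1.edges ↔
    e = (C.p, C.c) ∨ (e ∈ C.N.edges ∧ e ≠ (C.u, C.r) ∧ e.1 ≠ C.r ∧ e.2 ≠ C.r) := by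
  simp only [M1, Finset.mem_insert, Finset.mem_filter, mem_M0]; tauto

lemma mem_M2 (e : ℕ × ℕ) : e ∈ C.M2.edges ↔
    e = (C.a, C.b) ∨ (e ∈ C.N.edges ∧ e ≠ (C.u, C.r) ∧ e.1 ≠ C.u ∧ e.2 ≠ C.u) := by
  simp only [M2, Finset.mem_insert, Finset.mem_filter, mem_M0]; tauto

lemma mem_M3 (e : ℕ × ℕ) : e ∈ C.M3.edges ↔
    e = (C.a, C.b) ∨ e = (C.p, C.c) ∨
      (e ∈ C.N.edges ∧ e.1 ≠ C.u ∧ e.2 ≠ C.u ∧ e.1 ≠ C.r ∧ e.2 ≠ C.r) := by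
  have hpu := C.hpu
  have hcu := C.hcu
  simp only [M3, Finset.mem_insert, Finset.mem_filter, mem_M1]
  constructor
  · rintro (rfl | ⟨(rfl | ⟨h1, _, h3, h4⟩), h5, h6⟩)
    · exact Or.inl rfl
    · exact Or.inr (Or.inl rfl)
    · exact Or.inr (Or.inr ⟨h1, h5, h6, h3, h4⟩)
  · rintro (rfl | rfl | ⟨h1, h2, h3, h4, h5⟩)
    · exact Or.inl rfl
    · exact Or.inr ⟨Or.inl rfl, hpu, hcu⟩
    · refine Or.inr ⟨Or.inr ⟨h1, ?_, h4, h5⟩, h2, h3⟩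
      intro he; rw [he] at h2; exact h2 rfl

/-- Unified edge-membership characterization for the intermediate networks.
`su` / `sr` record whether `u` / `r` have already been suppressed. -/
def EdgeForm (su sr : Prop) (K : Net X) : Prop :=
  ∀ e : ℕ × ℕ, e ∈ K.edges ↔
    (su ∧ e = (C.a, C.b)) ∨ (sr ∧ e = (C.p, C.c)) ∨
      (e ∈ C.N.edges ∧ e ≠ (C.u, C.r) ∧ (su → e.1 ≠ C.u ∧ e.2 ≠ C.u) ∧
        (sr → e.1 ≠ C.r ∧ e.2 ≠ C.r))

lemma edgeForm_M0 : C.EdgeForm False False C.M0 := by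
  intro e; rw [C.mem_M0]; tauto

lemma edgeForm_M1 : C.EdgeForm False True C.M1 := by
  intro e; rw [C.mem_M1]; tauto

lemma edgeForm_M2 : C.EdgeForm True False C.M2 := by
  intro e; rw [C.mem_M2]; tauto

lemma edgeForm_M3 : C.EdgeForm True True C.M3 := by
  intro e
  have hne : e.1 ≠ C.u → e ≠ (C.u, C.r) := by
    intro h he; rw [he] at h; exact h rfl
  rw [C.mem_M3]; tauto

end Cfg

section FinsetAux

lemma aux_other_of_two {s : Finset (ℕ × ℕ)} (h2 : s.card = 2) {e : ℕ × ℕ} (he : e ∈ s) :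
    ∃ f ∈ s, f ≠ e ∧ ∀ g ∈ s, g = e ∨ g = f := by
  have h1 : (s.erase e).card = 1 := by rw [Finset.card_erase_of_mem he, h2]
  obtain ⟨f, hf⟩ := Finset.card_eq_one.mp h1
  have hfe : f ∈ s.erase e := hf ▸ Finset.mem_singleton_self f
  refine ⟨f, Finset.mem_of_mem_erase hfe, (Finset.mem_erase.mp hfe).1, ?_⟩
  intro g hg
  by_cases hge : g = e
  · exact Or.inl hge
  · right
    have : g ∈ s.erase e := Finset.mem_erase.mpr ⟨hge, hg⟩
    rw [hf] at this
    exact Finset.mem_singleton.mp this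

lemma aux_two_mem {s : Finset (ℕ × ℕ)} (h2 : s.card = 2) :
    ∃ e ∈ s, ∃ f ∈ s, e ≠ f :=
  Finset.one_lt_card.mp (by omega)

end FinsetAux

namespace Net

variable {X : Type}

lemma indeg_pos (N : Net X) {z v : ℕ} (h : N.Edge z v) : 1 ≤ N.indeg v :=
  Finset.card_pos.mpr ⟨(z, v), Finset.mem_filter.mpr ⟨h, rfl⟩⟩

lemma outdeg_pos (N : Net X) {v w : ℕ} (h : N.Edge v w) : 1 ≤ N.outdeg v :=
  Finset.card_pos.mpr ⟨(v, w), Finset.mem_filter.mpr ⟨h, rfl⟩⟩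

lemma two_le_indeg (N : Net X) {s t v : ℕ} (hs : N.Edge s v) (ht : N.Edge t v)
    (hst : s ≠ t) : 2 ≤ N.indeg v :=
  Finset.one_lt_card.mpr ⟨(s, v), Finset.mem_filter.mpr ⟨hs, rfl⟩,
    (t, v), Finset.mem_filter.mpr ⟨ht, rfl⟩, by simp [hst]⟩

lemma two_le_outdeg (N : Net X) {s t v : ℕ} (hs : N.Edge v s) (ht : N.Edge v t)
    (hst : s ≠ t) : 2 ≤ N.outdeg v :=
  Finset.one_lt_card.mpr ⟨(v, s), Finset.mem_filter.mpr ⟨hs, rfl⟩,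
    (v, t), Finset.mem_filter.mpr ⟨ht, rfl⟩, by simp [hst]⟩

lemma in_unique (N : Net X) {v : ℕ} (h1 : N.indeg v = 1) {s t : ℕ}
    (hs : N.Edge s v) (ht : N.Edge t v) : s = t := by
  have := Finset.card_le_one.mp h1.le (s, v) (Finset.mem_filter.mpr ⟨hs, rfl⟩)
    (t, v) (Finset.mem_filter.mpr ⟨ht, rfl⟩)
  exact congrArg Prod.fst this

lemma out_unique (N : Net X) {v : ℕ} (h1 : N.outdeg v = 1) {s t : ℕ}
    (hs : N.Edge v s) (ht : N.Edge v t) : s = t := by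
  have := Finset.card_le_one.mp h1.le (v, s) (Finset.mem_filter.mpr ⟨hs, rfl⟩)
    (v, t) (Finset.mem_filter.mpr ⟨ht, rfl⟩)
  exact congrArg Prod.snd this

/-- Extract an in-neighbour from positive indegree. -/
lemma exists_in (N : Net X) {v : ℕ} (h : 1 ≤ N.indeg v) : ∃ z, N.Edge z v := by
  obtain ⟨e, he⟩ := Finset.card_pos.mp h
  rw [Finset.mem_filter] at he
  refine ⟨e.1, ?_⟩
  have h2 : e = (e.1, v) := by
    rw [← he.2]
  rw [h2] at he
  exact he.1

lemma exists_out (N : Net X) {v : ℕ} (h : 1 ≤ N.outdeg v) : ∃ z, N.Edge v z := by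
  obtain ⟨e, he⟩ := Finset.card_pos.mp h
  rw [Finset.mem_filter] at he
  refine ⟨e.2, ?_⟩
  have h2 : e = (v, e.2) := by
    rw [← he.2]
  rw [h2] at he
  exact he.1

lemma ext' {N M : Net X} (h1 : N.verts = M.verts) (h2 : N.edges = M.edges)
    (h3 : N.lab = M.lab) : N = M := by
  cases N; cases M; simp_all

end Net

namespace Net

variable {X : Type}

lemma out_pair (N : Net X) {v : ℕ} (h : N.outdeg v = 2) :
    ∃ s t, s ≠ t ∧ N.Edge v s ∧ N.Edge v t := by
  obtain ⟨e₁, he₁, e₂, he₂, hne⟩ := aux_two_mem h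
  rw [Finset.mem_filter] at he₁ he₂
  have h1 : e₁ = (v, e₁.2) := by rw [← he₁.2]
  have h2 : e₂ = (v, e₂.2) := by rw [← he₂.2]
  refine ⟨e₁.2, e₂.2, ?_, by rw [h1] at he₁; exact he₁.1, by rw [h2] at he₂; exact he₂.1⟩
  intro hq
  apply hne
  rw [h1, h2, hq]

lemma in_pair (N : Net X) {v : ℕ} (h : N.indeg v = 2) :
    ∃ s t, s ≠ t ∧ N.Edge s v ∧ N.Edge t v := by
  obtain ⟨e₁, he₁, e₂, he₂, hne⟩ := aux_two_mem h
  rw [Finset.mem_filter] at he₁ he₂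
  have h1 : e₁ = (e₁.1, v) := by rw [← he₁.2]
  have h2 : e₂ = (e₂.1, v) := by rw [← he₂.2]
  refine ⟨e₁.1, e₂.1, ?_, by rw [h1] at he₁; exact he₁.1, by rw [h2] at he₂; exact he₂.1⟩
  intro hq
  apply hne
  rw [h1, h2, hq]

lemma out_other (N : Net X) {v s : ℕ} (h : N.outdeg v = 2) (hs : N.Edge v s) :
    ∃ t, t ≠ s ∧ N.Edge v t := by
  obtain ⟨f, hf, hfne, _⟩ := aux_other_of_two h (Finset.mem_filter.mpr ⟨hs, rfl⟩)
  rw [Finset.mem_filter] at hf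
  have h1 : f = (v, f.2) := by rw [← hf.2]
  refine ⟨f.2, ?_, by rw [h1] at hf; exact hf.1⟩
  intro hq
  apply hfne
  rw [h1, hq]

end Net

namespace Cfg

variable {X : Type} (C : Cfg X)

lemma suppress_classify (su sr : Prop) (K : Net X) (HK : C.EdgeForm su sr K)
    (v z w : ℕ) (h1 : K.indeg v = 1) (h2 : K.outdeg v = 1)
    (hzv : K.Edge z v) (hvw : K.Edge v w) :
    (v = C.u ∧ ¬ su ∧ z = C.a ∧ w = C.b) ∨ (v = C.r ∧ ¬ sr ∧ z = C.p ∧ w = C.c) := by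
  have hvN : v ∈ C.N.verts := by
    rcases (HK (z, v)).1 hzv with ⟨_, h⟩ | ⟨_, h⟩ | ⟨hN, _⟩
    · have hvb : v = C.b := congrArg Prod.snd h
      rw [hvb]; exact (C.closure _ C.hub).2
    · have hvc : v = C.c := congrArg Prod.snd h
      rw [hvc]; exact (C.closure _ C.hrc).2
    · exact (C.closure _ hN).2
  rcases C.types v hvN with hty | hty | hty | hty
  -- ROOT: impossible, v has an incoming edge
  · exfalso
    have h0 : C.N.indeg v = 0 := hty.2.1
    rcases (HK (z, v)).1 hzv with ⟨_, h⟩ | ⟨_, h⟩ | ⟨hN, _⟩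
    · have hvb : v = C.b := congrArg Prod.snd h
      rw [hvb] at h0
      have := C.N.indeg_pos C.hub; omega
    · have hvc : v = C.c := congrArg Prod.snd h
      rw [hvc] at h0
      have := C.N.indeg_pos C.hrc; omega
    · have := C.N.indeg_pos hN; omega
  -- LEAF: impossible, v has an outgoing edge
  · exfalso
    have h0 : C.N.outdeg v = 0 := hty.2.2
    rcases (HK (v, w)).1 hvw with ⟨_, h⟩ | ⟨_, h⟩ | ⟨hN, _⟩
    · have hva : v = C.a := congrArg Prod.fst h
      rw [hva] at h0
      have := C.N.outdeg_pos C.hau; omega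
    · have hvp : v = C.p := congrArg Prod.fst h
      rw [hvp] at h0
      have := C.N.outdeg_pos C.hpr; omega
    · have := C.N.outdeg_pos hN; omega
  -- TREE NODE
  · have hvr : v ≠ C.r := by
      rintro rfl
      have := C.N.two_le_indeg C.hur C.hpr (Ne.symm C.hpu)
      have h' := hty.2.1
      omega
    by_cases hvu : v = C.u
    · subst hvu
      by_cases hsu : su
      · exfalso
        rcases (HK (C.u, w)).1 hvw with ⟨_, h⟩ | ⟨_, h⟩ | ⟨_, _, hsuc, _⟩
        · exact C.hau_ne (congrArg Prod.fst h).symm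
        · exact C.hpu (congrArg Prod.fst h).symm
        · exact (hsuc hsu).1 rfl
      · left
        refine ⟨rfl, hsu, ?_, ?_⟩
        · rcases (HK (z, C.u)).1 hzv with ⟨_, h⟩ | ⟨_, h⟩ | ⟨hN, _⟩
          · exact absurd (congrArg Prod.snd h) (Ne.symm C.hbu)
          · exact absurd (congrArg Prod.snd h) (Ne.symm C.hcu)
          · exact C.hinu z hN
        · rcases (HK (C.u, w)).1 hvw with ⟨_, h⟩ | ⟨_, h⟩ | ⟨hN, hne, _, _⟩
          · exact absurd (congrArg Prod.fst h) (Ne.symm C.hau_ne)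
          · exact absurd (congrArg Prod.fst h) (Ne.symm C.hpu)
          · rcases C.houtu w hN with h | h
            · exact absurd (by rw [h]) hne
            · exact h
    · exfalso
      have hsurv : ∀ q, C.N.Edge v q → (su → q ≠ C.u) → (sr → q ≠ C.r) → K.Edge v q := by
        intro q hq hqu hqr
        refine (HK _).2 (Or.inr (Or.inr ⟨hq, ?_, fun hs => ⟨hvu, hqu hs⟩,
          fun hs => ⟨hvr, hqr hs⟩⟩))
        intro he; exact hvu (congrArg Prod.fst he)
      by_cases hva : su ∧ v = C.a
      · obtain ⟨hsu, hva'⟩ := hva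
        have hKab : K.Edge v C.b := (HK _).2 (Or.inl ⟨hsu, by rw [hva']⟩)
        have hvau : C.N.Edge v C.u := by rw [hva']; exact C.hau
        obtain ⟨t₀, ht₀ne, ht₀⟩ := C.N.out_other hty.2.2 hvau
        by_cases htr : sr ∧ t₀ = C.r
        · have hap : v = C.p := by
            rcases C.hinr v (htr.2 ▸ ht₀) with h | h
            · exact absurd (hva'.symm.trans h) C.hau_ne
            · exact h
          have hKac : K.Edge v C.c := by
            refine (HK _).2 (Or.inr (Or.inl ⟨htr.1, ?_⟩))
            rw [hap]
          have := K.two_le_outdeg hKab hKac C.hbc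
          omega
        · have hKat : K.Edge v t₀ := hsurv t₀ ht₀ (fun _ => ht₀ne)
            (fun hs h => htr ⟨hs, h⟩)
          have hbt : C.b ≠ t₀ := by
            rintro rfl
            rw [hva'] at ht₀
            exact C.hab_not_edge ht₀
          have := K.two_le_outdeg hKab hKat hbt
          omega
      · by_cases hvp : sr ∧ v = C.p
        · obtain ⟨hsr, hvp'⟩ := hvp
          have hKpc : K.Edge v C.c := (HK _).2 (Or.inr (Or.inl ⟨hsr, by rw [hvp']⟩))
          have hvpr : C.N.Edge v C.r := by rw [hvp']; exact C.hpr
          obtain ⟨t₀, ht₀ne, ht₀⟩ := C.N.out_other hty.2.2 hvpr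
          have hKpt : K.Edge v t₀ := hsurv t₀ ht₀
            (fun hs h => hva ⟨hs, C.hinu v (h ▸ ht₀)⟩) (fun _ => ht₀ne)
          have hct : C.c ≠ t₀ := by
            rintro rfl
            rw [hvp'] at ht₀
            exact C.hpc_not_edge ht₀
          have := K.two_le_outdeg hKpc hKpt hct
          omega
        · obtain ⟨s, t, hst, hs, ht⟩ := C.N.out_pair hty.2.2
          have hKs : K.Edge v s := hsurv s hs
            (fun hsu h => hva ⟨hsu, C.hinu v (h ▸ hs)⟩)
            (fun hsr h => by
              rcases C.hinr v (h ▸ hs) with hh | hh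
              · exact hvu hh
              · exact hvp ⟨hsr, hh⟩)
          have hKt : K.Edge v t := hsurv t ht
            (fun hsu h => hva ⟨hsu, C.hinu v (h ▸ ht)⟩)
            (fun hsr h => by
              rcases C.hinr v (h ▸ ht) with hh | hh
              · exact hvu hh
              · exact hvp ⟨hsr, hh⟩)
          have := K.two_le_outdeg hKs hKt hst
          omega
  -- RETICULATION
  · have hvu : v ≠ C.u := by
      rintro rfl
      obtain ⟨s, t, hst, hs, ht⟩ := C.N.in_pair hty.2.1
      exact hst ((C.hinu s hs).trans (C.hinu t ht).symm)
    by_cases hvr : v = C.r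
    · subst hvr
      by_cases hsr : sr
      · exfalso
        rcases (HK (z, C.r)).1 hzv with ⟨_, h⟩ | ⟨_, h⟩ | ⟨_, _, _, hsrc⟩
        · exact C.hbr (congrArg Prod.snd h).symm
        · exact C.hcr (congrArg Prod.snd h).symm
        · exact (hsrc hsr).2 rfl
      · right
        refine ⟨rfl, hsr, ?_, ?_⟩
        · rcases (HK (z, C.r)).1 hzv with ⟨_, h⟩ | ⟨_, h⟩ | ⟨hN, hne, _, _⟩
          · exact absurd (congrArg Prod.snd h) (Ne.symm C.hbr)
          · exact absurd (congrArg Prod.snd h) (Ne.symm C.hcr)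
          · rcases C.hinr z hN with h | h
            · exact absurd (by rw [h]) hne
            · exact h
        · rcases (HK (C.r, w)).1 hvw with ⟨_, h⟩ | ⟨_, h⟩ | ⟨hN, _⟩
          · exact absurd (congrArg Prod.fst h) (Ne.symm C.har)
          · exact absurd (congrArg Prod.fst h) (Ne.symm C.hpr_ne)
          · exact C.houtr w hN
    · exfalso
      have hvb : v ≠ C.b := by
        rintro rfl
        obtain ⟨s, t, hst, hs, ht⟩ := C.N.in_pair hty.2.1
        exact hst ((C.hinb s hs).trans (C.hinb t ht).symm)
      have hvc : v ≠ C.c := by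
        rintro rfl
        obtain ⟨s, t, hst, hs, ht⟩ := C.N.in_pair hty.2.1
        exact hst ((C.hinc s hs).trans (C.hinc t ht).symm)
      obtain ⟨s, t, hst, hs, ht⟩ := C.N.in_pair hty.2.1
      have hsurv' : ∀ q, C.N.Edge q v → K.Edge q v := by
        intro q hq
        have hqu : q ≠ C.u := by
          rintro rfl
          rcases C.houtu v hq with h | h
          · exact hvr h
          · exact hvb h
        have hqr : q ≠ C.r := by
          rintro rfl
          exact hvc (C.houtr v hq)
        refine (HK _).2 (Or.inr (Or.inr ⟨hq, ?_, fun _ => ⟨hqu, hvu⟩, fun _ => ⟨hqr, hvr⟩⟩))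
        intro he; exact hqu (congrArg Prod.fst he)
      have := K.two_le_indeg (hsurv' s hs) (hsurv' t ht) hst
      omega

lemma no_delNode (su sr : Prop) (K : Net X) (HK : C.EdgeForm su sr K)
    (hV : K.verts ⊆ C.N.verts) (hL : K.lab = C.N.lab)
    (hsuV : su → C.u ∉ K.verts) (hsrV : sr → C.r ∉ K.verts)
    (v : ℕ) (hv : v ∈ K.verts) (h0 : K.outdeg v = 0) (hlab : K.lab v = none) : False := by
  have hvN : v ∈ C.N.verts := hV hv
  have hnl : ¬ C.N.IsLeaf v := by
    intro hl
    obtain ⟨xx, hxx⟩ := (C.lableaf v).mpr hl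
    rw [hL] at hlab
    rw [hlab] at hxx
    cases hxx
  -- v has an outgoing N-edge
  have hout : ∃ q, C.N.Edge v q := by
    rcases C.types v hvN with h | h | h | h
    · exact C.N.exists_out (by rw [h.2.2])
    · exact absurd h hnl
    · exact C.N.exists_out (by rw [h.2.2]; omega)
    · exact C.N.exists_out (by rw [h.2.2])
  obtain ⟨q, hq⟩ := hout
  -- produce an outgoing K-edge
  have hK : ∃ q', K.Edge v q' := by
    by_cases hvu : v = C.u
    · subst hvu
      by_cases hsu : su
      · exact absurd hv (hsuV hsu)
      · refine ⟨C.b, (HK _).2 (Or.inr (Or.inr ⟨C.hub, ?_, fun hs => absurd hs hsu,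
          fun _ => ⟨C.hru.symm, C.hbr⟩⟩))⟩
        intro he
        exact C.hbr (congrArg Prod.snd he)
    · by_cases hvr : v = C.r
      · subst hvr
        by_cases hsr : sr
        · exact absurd hv (hsrV hsr)
        · refine ⟨C.c, (HK _).2 (Or.inr (Or.inr ⟨C.hrc, ?_, fun _ => ⟨C.hru, C.hcu⟩,
            fun hs => absurd hs hsr⟩))⟩
          intro he
          exact C.hru (congrArg Prod.fst he)
      · by_cases hva : su ∧ v = C.a
        · exact ⟨C.b, (HK _).2 (Or.inl ⟨hva.1, by rw [hva.2]⟩)⟩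
        · by_cases hvp : sr ∧ v = C.p
          · exact ⟨C.c, (HK _).2 (Or.inr (Or.inl ⟨hvp.1, by rw [hvp.2]⟩))⟩
          · refine ⟨q, (HK _).2 (Or.inr (Or.inr ⟨hq, ?_, ?_, ?_⟩))⟩
            · intro he; exact hvu (congrArg Prod.fst he)
            · intro hsu
              refine ⟨hvu, ?_⟩
              intro hqu
              exact hva ⟨hsu, C.hinu v (hqu ▸ hq)⟩
            · intro hsr
              refine ⟨hvr, ?_⟩
              intro hqr
              rcases C.hinr v (hqr ▸ hq) with h | h
              · exact hvu h
              · exact hvp ⟨hsr, h⟩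
  obtain ⟨q', hq'⟩ := hK
  have := K.outdeg_pos hq'
  omega

lemma step_M0 {K' : Net X} (h : Net.CleanStep C.M0 K') : K' = C.M1 ∨ K' = C.M2 := by
  cases h with
  | delNode v hv h0 hlab =>
    exact (C.no_delNode False False C.M0 C.edgeForm_M0 (fun z hz => hz) rfl
      (fun h => h.elim) (fun h => h.elim) v hv h0 hlab).elim
  | suppress z v w h1 h2 hu hw =>
    rcases C.suppress_classify False False C.M0 C.edgeForm_M0 v z w h1 h2 hu hw with
      ⟨rfl, _, rfl, rfl⟩ | ⟨rfl, _, rfl, rfl⟩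
    · exact Or.inr rfl
    · exact Or.inl rfl

lemma step_M1 {K' : Net X} (h : Net.CleanStep C.M1 K') : K' = C.M3 := by
  cases h with
  | delNode v hv h0 hlab =>
    exact (C.no_delNode False True C.M1 C.edgeForm_M1 (Finset.erase_subset _ _) rfl
      (fun h => h.elim) (fun _ => Finset.notMem_erase _ _) v hv h0 hlab).elim
  | suppress z v w h1 h2 hu hw =>
    rcases C.suppress_classify False True C.M1 C.edgeForm_M1 v z w h1 h2 hu hw with
      ⟨rfl, _, rfl, rfl⟩ | ⟨_, hns, _, _⟩
    · rfl
    · exact (hns trivial).elim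

lemma step_M2 {K' : Net X} (h : Net.CleanStep C.M2 K') : K' = C.M3 := by
  cases h with
  | delNode v hv h0 hlab =>
    exact (C.no_delNode True False C.M2 C.edgeForm_M2 (Finset.erase_subset _ _) rfl
      (fun _ => Finset.notMem_erase _ _) (fun h => h.elim) v hv h0 hlab).elim
  | suppress z v w h1 h2 hu hw =>
    rcases C.suppress_classify True False C.M2 C.edgeForm_M2 v z w h1 h2 hu hw with
      ⟨_, hns, _, _⟩ | ⟨rfl, _, rfl, rfl⟩
    · exact (hns trivial).elim
    · refine Net.ext' Finset.erase_right_comm ?_ rfl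
      ext e
      rw [Finset.mem_insert, Finset.mem_filter, C.mem_M2, C.mem_M3]
      constructor
      · rintro (rfl | ⟨(rfl | ⟨h1', h2', h3', h4'⟩), h5', h6'⟩)
        · exact Or.inr (Or.inl rfl)
        · exact Or.inl rfl
        · exact Or.inr (Or.inr ⟨h1', h3', h4', h5', h6'⟩)
      · rintro (rfl | rfl | ⟨h1', h2', h3', h4', h5'⟩)
        · exact Or.inr ⟨Or.inl rfl, C.har, C.hbr⟩
        · exact Or.inl rfl
        · refine Or.inr ⟨Or.inr ⟨h1', ?_, h2', h3'⟩, h4', h5'⟩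
          intro he
          rw [he] at h5'
          exact h5' rfl

lemma step_M3 {K' : Net X} (h : Net.CleanStep C.M3 K') : False := by
  cases h with
  | delNode v hv h0 hlab =>
    refine C.no_delNode True True C.M3 C.edgeForm_M3
      (fun z hz => Finset.mem_of_mem_erase (Finset.mem_of_mem_erase hz)) rfl
      (fun _ => Finset.notMem_erase _ _) ?_ v hv h0 hlab
    intro _ hr
    exact (Finset.mem_erase.mp (Finset.mem_erase.mp hr).2).1 rfl
  | suppress z v w h1 h2 hu hw =>
    rcases C.suppress_classify True True C.M3 C.edgeForm_M3 v z w h1 h2 hu hw with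
      ⟨_, hns, _, _⟩ | ⟨_, hns, _, _⟩ <;> exact hns trivial

lemma rtg_classify {K : Net X} (h : Relation.ReflTransGen Net.CleanStep C.M0 K) :
    K = C.M0 ∨ K = C.M1 ∨ K = C.M2 ∨ K = C.M3 := by
  induction h with
  | refl => exact Or.inl rfl
  | tail hs hstep ih =>
    rcases ih with rfl | rfl | rfl | rfl
    · rcases C.step_M0 hstep with rfl | rfl
      · exact Or.inr (Or.inl rfl)
      · exact Or.inr (Or.inr (Or.inl rfl))
    · exact Or.inr (Or.inr (Or.inr (C.step_M1 hstep)))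
    · exact Or.inr (Or.inr (Or.inr (C.step_M2 hstep)))
    · exact (C.step_M3 hstep).elim

lemma M0_indeg_r : C.M0.indeg C.r = 1 := by
  have hset : C.M0.edges.filter (fun e => e.2 = C.r) = {(C.p, C.r)} := by
    ext e
    simp only [Finset.mem_filter, Finset.mem_singleton]
    constructor
    · rintro ⟨hm, h3⟩
      obtain ⟨h1, h2⟩ := (C.mem_M0 e).1 hm
      have he : e = (e.1, C.r) := by rw [← h3]
      rw [he] at h1 h2 ⊢
      rcases C.hinr e.1 h1 with h | h
      · exact absurd (by rw [h]) h2
      · rw [h]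
    · rintro rfl
      exact ⟨(C.mem_M0 _).2 ⟨C.hpr, fun he => C.hpu (congrArg Prod.fst he)⟩, rfl⟩
  rw [Net.indeg, hset, Finset.card_singleton]

lemma M0_outdeg_r : C.M0.outdeg C.r = 1 := by
  have hset : C.M0.edges.filter (fun e => e.1 = C.r) = {(C.r, C.c)} := by
    ext e
    simp only [Finset.mem_filter, Finset.mem_singleton]
    constructor
    · rintro ⟨hm, h3⟩
      obtain ⟨h1, _⟩ := (C.mem_M0 e).1 hm
      have he : e = (C.r, e.2) := by rw [← h3]
      rw [he] at h1 ⊢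
      rw [C.houtr e.2 h1]
    · rintro rfl
      exact ⟨(C.mem_M0 _).2 ⟨C.hrc, fun he => C.hru (congrArg Prod.fst he)⟩, rfl⟩
  rw [Net.outdeg, hset, Finset.card_singleton]

lemma M1_indeg_u : C.M1.indeg C.u = 1 := by
  have hset : C.M1.edges.filter (fun e => e.2 = C.u) = {(C.a, C.u)} := by
    ext e
    simp only [Finset.mem_filter, Finset.mem_singleton]
    constructor
    · rintro ⟨hm, h3⟩
      rcases (C.mem_M1 e).1 hm with rfl | ⟨h1, _, _, _⟩
      · exact absurd h3 C.hcu
      · have he : e = (e.1, C.u) := by rw [← h3]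
        rw [he] at h1 ⊢
        rw [C.hinu e.1 h1]
    · rintro rfl
      refine ⟨(C.mem_M1 _).2 (Or.inr ⟨C.hau, ?_, C.har, C.hru.symm⟩), rfl⟩
      intro he
      exact C.hau_ne (congrArg Prod.fst he)
  rw [Net.indeg, hset, Finset.card_singleton]

lemma M1_outdeg_u : C.M1.outdeg C.u = 1 := by
  have hset : C.M1.edges.filter (fun e => e.1 = C.u) = {(C.u, C.b)} := by
    ext e
    simp only [Finset.mem_filter, Finset.mem_singleton]
    constructor
    · rintro ⟨hm, h3⟩
      rcases (C.mem_M1 e).1 hm with rfl | ⟨h1, _, _, h4⟩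
      · exact absurd h3 C.hpu
      · have he : e = (C.u, e.2) := by rw [← h3]
        rw [he] at h1 h4 ⊢
        rcases C.houtu e.2 h1 with h | h
        · exact absurd h h4
        · rw [h]
    · rintro rfl
      refine ⟨(C.mem_M1 _).2 (Or.inr ⟨C.hub, ?_, C.hru.symm, C.hbr⟩), rfl⟩
      intro he
      exact C.hbr (congrArg Prod.snd he)
  rw [Net.outdeg, hset, Finset.card_singleton]

lemma M2_indeg_r : C.M2.indeg C.r = 1 := by
  have hset : C.M2.edges.filter (fun e => e.2 = C.r) = {(C.p, C.r)} := by
    ext e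
    simp only [Finset.mem_filter, Finset.mem_singleton]
    constructor
    · rintro ⟨hm, h3⟩
      rcases (C.mem_M2 e).1 hm with rfl | ⟨h1, _, h4, _⟩
      · exact absurd h3 C.hbr
      · have he : e = (e.1, C.r) := by rw [← h3]
        rw [he] at h1 h4 ⊢
        rcases C.hinr e.1 h1 with h | h
        · exact absurd h h4
        · rw [h]
    · rintro rfl
      refine ⟨(C.mem_M2 _).2 (Or.inr ⟨C.hpr, ?_, C.hpu, C.hru⟩), rfl⟩
      intro he
      exact C.hpu (congrArg Prod.fst he)
  rw [Net.indeg, hset, Finset.card_singleton]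

lemma M2_outdeg_r : C.M2.outdeg C.r = 1 := by
  have hset : C.M2.edges.filter (fun e => e.1 = C.r) = {(C.r, C.c)} := by
    ext e
    simp only [Finset.mem_filter, Finset.mem_singleton]
    constructor
    · rintro ⟨hm, h3⟩
      rcases (C.mem_M2 e).1 hm with rfl | ⟨h1, _, _, _⟩
      · exact absurd h3 C.har
      · have he : e = (C.r, e.2) := by rw [← h3]
        rw [he] at h1 ⊢
        rw [C.houtr e.2 h1]
    · rintro rfl
      refine ⟨(C.mem_M2 _).2 (Or.inr ⟨C.hrc, ?_, C.hru, C.hcu⟩), rfl⟩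
      intro he
      exact C.hru (congrArg Prod.fst he)
  rw [Net.outdeg, hset, Finset.card_singleton]

lemma cleansTo_M3 {K : Net X} (h : Net.CleansTo C.M0 K) : K = C.M3 := by
  obtain ⟨hrtg, hmax⟩ := h
  rcases C.rtg_classify hrtg with rfl | rfl | rfl | rfl
  · exact absurd (Net.CleanStep.suppress C.M0 C.p C.r C.c C.M0_indeg_r C.M0_outdeg_r
      ((C.mem_M0 _).2 ⟨C.hpr, fun he => C.hpu (congrArg Prod.fst he)⟩)
      ((C.mem_M0 _).2 ⟨C.hrc, fun he => C.hru (congrArg Prod.fst he)⟩)) (hmax _)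
  · exact absurd (Net.CleanStep.suppress C.M1 C.a C.u C.b C.M1_indeg_u C.M1_outdeg_u
      ((C.mem_M1 _).2 (Or.inr ⟨C.hau, fun he => C.hau_ne (congrArg Prod.fst he),
        C.har, C.hru.symm⟩))
      ((C.mem_M1 _).2 (Or.inr ⟨C.hub, fun he => C.hbr (congrArg Prod.snd he),
        C.hru.symm, C.hbr⟩))) (hmax _)
  · exact absurd (Net.CleanStep.suppress C.M2 C.p C.r C.c C.M2_indeg_r C.M2_outdeg_r
      ((C.mem_M2 _).2 (Or.inr ⟨C.hpr, fun he => C.hpu (congrArg Prod.fst he),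
        C.hpu, C.hru⟩))
      ((C.mem_M2 _).2 (Or.inr ⟨C.hrc, fun he => C.hru (congrArg Prod.fst he),
        C.hru, C.hcu⟩))) (hmax _)
  · rfl

lemma medge_reach (M : Net X)
    (htri : ∀ e ∈ M.edges, e = (C.a, C.b) ∨ e = (C.p, C.c) ∨ e ∈ C.N.edges) :
    ∀ x y, M.Edge x y → C.N.Reaches x y := by
  intro x y hxy
  rcases htri _ hxy with h | h | h
  · have hx : x = C.a := congrArg Prod.fst h
    have hy : y = C.b := congrArg Prod.snd h
    subst hx; subst hy
    exact (Relation.ReflTransGen.single C.hau).trans (Relation.ReflTransGen.single C.hub)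
  · have hx : x = C.p := congrArg Prod.fst h
    have hy : y = C.c := congrArg Prod.snd h
    subst hx; subst hy
    exact (Relation.ReflTransGen.single C.hpr).trans (Relation.ReflTransGen.single C.hrc)
  · exact Relation.ReflTransGen.single h

lemma macyc (M : Net X)
    (htri : ∀ e ∈ M.edges, e = (C.a, C.b) ∨ e = (C.p, C.c) ∨ e ∈ C.N.edges) :
    ∀ v w, M.Edge v w → ¬ M.Reaches w v := by
  intro v w hvw hwv
  have h1 : C.N.Reaches w v := aux_rtg_mono (C.medge_reach M htri) w v hwv
  rcases htri _ hvw with h | h | h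
  · have hx : v = C.a := congrArg Prod.fst h
    have hy : w = C.b := congrArg Prod.snd h
    subst hx; subst hy
    exact C.hacyc _ _ C.hub (h1.trans (Relation.ReflTransGen.single C.hau))
  · have hx : v = C.p := congrArg Prod.fst h
    have hy : w = C.c := congrArg Prod.snd h
    subst hx; subst hy
    exact C.hacyc _ _ C.hrc (h1.trans (Relation.ReflTransGen.single C.hpr))
  · exact C.hacyc _ _ h h1

lemma lift_leg (M : Net X)
    (htri : ∀ e ∈ M.edges, e = (C.a, C.b) ∨ e = (C.p, C.c) ∨ e ∈ C.N.edges) :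
    ∀ s : List ℕ, List.Chain' M.Edge s → s.Nodup → C.u ∉ s → C.r ∉ s →
    ∃ s' : List ℕ,
      List.Chain' C.N.Edge s' ∧ s'.head? = s.head? ∧ s'.getLast? = s.getLast? ∧
      s'.length = s.length + (if C.u ∈ s' then 1 else 0) + (if C.r ∈ s' then 1 else 0) ∧
      (C.u ∈ s' → ∃ A B, s' = A ++ C.u :: B ∧ A ≠ []) ∧
      (C.r ∈ s' → ∃ A B, s' = A ++ C.r :: B ∧ A ≠ []) ∧
      (C.u ∈ s' → C.r ∈ s' → ∃ A D B, s' = A ++ C.u :: D ++ C.r :: B ∧ A ≠ [] ∧ D ≠ []) ∧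
      (C.u ∈ s' → C.a ∈ s) ∧ (C.r ∈ s' → C.p ∈ s) := by
  intro s
  induction s with
  | nil =>
    intro _ _ _ _
    exact ⟨[], by simp [List.Chain'], rfl, rfl, by simp, by simp, by simp, by simp, by simp, by simp⟩
  | cons v t ih =>
    intro hc hnd hu hr
    cases t with
    | nil =>
      refine ⟨[v], by simp [List.Chain'], rfl, rfl, by
          have h1 : ¬ (C.u = v) := by simpa using hu
          have h2 : ¬ (C.r = v) := by simpa using hr
          simp [h1, h2],
        fun hmem => absurd hmem hu, fun hmem => absurd hmem hr,
        fun hmem _ => absurd hmem hu, fun hmem => absurd hmem hu,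
        fun hmem => absurd hmem hr⟩
    | cons w t' =>
      replace hc := List.isChain_cons_cons.mp hc
      obtain ⟨hvw, hrest⟩ := hc
      have hu' : C.u ∉ w :: t' := fun hh => hu (List.mem_cons_of_mem _ hh)
      have hr' : C.r ∉ w :: t' := fun hh => hr (List.mem_cons_of_mem _ hh)
      have hvu : v ≠ C.u := fun hh => hu (hh ▸ List.mem_cons_self)
      have hvr : v ≠ C.r := fun hh => hr (hh ▸ List.mem_cons_self)
      obtain ⟨s'', hch, hh, hl, hlen, hdu, hdr, hdur, hua, hrp⟩ :=
        ih hrest hnd.of_cons hu' hr'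
      have hs''ne : s'' ≠ [] := by
        intro hh'
        rw [hh'] at hh
        simp at hh
      rcases htri _ hvw with hedge | hedge | hedge
      · -- the edge (v,w) is the shortcut (a,b); insert u
        have hva : v = C.a := congrArg Prod.fst hedge
        have hwb : w = C.b := congrArg Prod.snd hedge
        have hus'' : C.u ∉ s'' := by
          intro hmem
          have : C.a ∈ w :: t' := hua hmem
          rw [← hva] at this
          exact (List.nodup_cons.mp hnd).1 this
        refine ⟨v :: C.u :: s'', ?_, rfl, ?_, ?_, ?_, ?_, ?_, ?_, ?_⟩
        · refine List.isChain_cons_cons.mpr ?_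
          refine ⟨by rw [hva]; exact C.hau, ?_⟩
          refine List.isChain_cons.mpr ?_
          refine ⟨?_, hch⟩
          intro yy hyy
          rw [hh] at hyy
          have : yy = w := by
            simp only [List.head?_cons, Option.mem_def, Option.some.injEq] at hyy
            exact hyy.symm
          rw [this, hwb]
          exact C.hub
        · rw [show v :: C.u :: s'' = [v, C.u] ++ s'' from rfl,
            aux_getLast?_append_right _ _ hs''ne, hl]
          cases t' <;> rfl
        · have hmu : C.u ∈ v :: C.u :: s'' := List.mem_cons_of_mem _ (List.mem_cons_self)
          have hmr : C.r ∈ v :: C.u :: s'' ↔ C.r ∈ s'' := by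
            simp [Ne.symm hvr, C.hru]
          rw [if_pos hmu]
          by_cases hrmem : C.r ∈ s''
          · rw [if_pos (hmr.mpr hrmem)]
            rw [if_neg hus'', if_pos hrmem] at hlen
            simp only [List.length_cons] at *
            omega
          · rw [if_neg (fun hh' => hrmem (hmr.mp hh'))]
            rw [if_neg hus'', if_neg hrmem] at hlen
            simp only [List.length_cons] at *
            omega
        · intro _
          exact ⟨[v], s'', rfl, by simp⟩
        · intro hmem
          have hrmem : C.r ∈ s'' := by
            rcases List.mem_cons.mp hmem with hh' | hh'
            · exact absurd hh'.symm hvr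
            · rcases List.mem_cons.mp hh' with hh'' | hh''
              · exact absurd hh'' C.hru
              · exact hh''
          obtain ⟨A, B, hAB, hAne⟩ := hdr hrmem
          exact ⟨v :: C.u :: A, B, by rw [hAB]; rfl, by simp⟩
        · intro _ hmem
          have hrmem : C.r ∈ s'' := by
            rcases List.mem_cons.mp hmem with hh' | hh'
            · exact absurd hh'.symm hvr
            · rcases List.mem_cons.mp hh' with hh'' | hh''
              · exact absurd hh'' C.hru
              · exact hh''
          obtain ⟨A, B, hAB, hAne⟩ := hdr hrmem
          exact ⟨[v], A, B, by rw [hAB]; rfl, by simp, hAne⟩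
        · intro _
          rw [hva]
          exact List.mem_cons_self
        · intro hmem
          have hrmem : C.r ∈ s'' := by
            rcases List.mem_cons.mp hmem with hh' | hh'
            · exact absurd hh'.symm hvr
            · rcases List.mem_cons.mp hh' with hh'' | hh''
              · exact absurd hh'' C.hru
              · exact hh''
          exact List.mem_cons_of_mem _ (hrp hrmem)
      · -- the edge (v,w) is the shortcut (p,c); insert r
        have hvp : v = C.p := congrArg Prod.fst hedge
        have hwc : w = C.c := congrArg Prod.snd hedge
        have hrs'' : C.r ∉ s'' := by
          intro hmem
          have : C.p ∈ w :: t' := hrp hmem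
          rw [← hvp] at this
          exact (List.nodup_cons.mp hnd).1 this
        have hus'' : C.u ∉ s'' := by
          intro hmem
          have haw : C.a ∈ w :: t' := hua hmem
          have h1 : M.Reaches w C.a := aux_chain_reach t' w C.a hrest haw
          have h2 : C.N.Reaches w C.a := aux_rtg_mono (C.medge_reach M htri) _ _ h1
          rw [hwc] at h2
          exact C.hacyc _ _ C.hur
            (((Relation.ReflTransGen.single C.hrc).trans h2).trans
              (Relation.ReflTransGen.single C.hau))
        refine ⟨v :: C.r :: s'', ?_, rfl, ?_, ?_, ?_, ?_, ?_, ?_, ?_⟩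
        · refine List.isChain_cons_cons.mpr ?_
          refine ⟨by rw [hvp]; exact C.hpr, ?_⟩
          refine List.isChain_cons.mpr ?_
          refine ⟨?_, hch⟩
          intro yy hyy
          rw [hh] at hyy
          have : yy = w := by
            simp only [List.head?_cons, Option.mem_def, Option.some.injEq] at hyy
            exact hyy.symm
          rw [this, hwc]
          exact C.hrc
        · rw [show v :: C.r :: s'' = [v, C.r] ++ s'' from rfl,
            aux_getLast?_append_right _ _ hs''ne, hl]
          cases t' <;> rfl
        · have hmr : C.r ∈ v :: C.r :: s'' := List.mem_cons_of_mem _ (List.mem_cons_self)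
          have hmu : C.u ∉ v :: C.r :: s'' := by
            intro hmem
            rcases List.mem_cons.mp hmem with hh' | hh'
            · exact hvu hh'.symm
            · rcases List.mem_cons.mp hh' with hh'' | hh''
              · exact C.hru hh''.symm
              · exact hus'' hh''
          rw [if_pos hmr, if_neg hmu]
          rw [if_neg hus'', if_neg hrs''] at hlen
          simp only [List.length_cons] at *
          omega
        · intro hmem
          exact absurd hmem (by
            intro hmem'
            rcases List.mem_cons.mp hmem' with hh' | hh'
            · exact hvu hh'.symm
            · rcases List.mem_cons.mp hh' with hh'' | hh''
              · exact C.hru hh''.symm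
              · exact hus'' hh'')
        · intro _
          exact ⟨[v], s'', rfl, by simp⟩
        · intro hmem _
          exact absurd hmem (by
            intro hmem'
            rcases List.mem_cons.mp hmem' with hh' | hh'
            · exact hvu hh'.symm
            · rcases List.mem_cons.mp hh' with hh'' | hh''
              · exact C.hru hh''.symm
              · exact hus'' hh'')
        · intro hmem
          exact absurd hmem (by
            intro hmem'
            rcases List.mem_cons.mp hmem' with hh' | hh'
            · exact hvu hh'.symm
            · rcases List.mem_cons.mp hh' with hh'' | hh''
              · exact C.hru hh''.symm
              · exact hus'' hh'')
        · intro _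
          rw [hvp]
          exact List.mem_cons_self
      · -- ordinary edge of N
        refine ⟨v :: s'', ?_, rfl, ?_, ?_, ?_, ?_, ?_, ?_, ?_⟩
        · refine List.isChain_cons.mpr ?_
          refine ⟨?_, hch⟩
          intro yy hyy
          rw [hh] at hyy
          have : yy = w := by
            simp only [List.head?_cons, Option.mem_def, Option.some.injEq] at hyy
            exact hyy.symm
          rw [this]
          exact hedge
        · rw [show v :: s'' = [v] ++ s'' from rfl,
            aux_getLast?_append_right _ _ hs''ne, hl]
          cases t' <;> rfl
        · have hmu : C.u ∈ v :: s'' ↔ C.u ∈ s'' := by simp [Ne.symm hvu]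
          have hmr : C.r ∈ v :: s'' ↔ C.r ∈ s'' := by simp [Ne.symm hvr]
          by_cases h1 : C.u ∈ s'' <;> by_cases h2 : C.r ∈ s''
          · rw [if_pos (hmu.mpr h1), if_pos (hmr.mpr h2)]
            rw [if_pos h1, if_pos h2] at hlen
            simp only [List.length_cons] at *
            omega
          · rw [if_pos (hmu.mpr h1), if_neg (fun hh' => h2 (hmr.mp hh'))]
            rw [if_pos h1, if_neg h2] at hlen
            simp only [List.length_cons] at *
            omega
          · rw [if_neg (fun hh' => h1 (hmu.mp hh')), if_pos (hmr.mpr h2)]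
            rw [if_neg h1, if_pos h2] at hlen
            simp only [List.length_cons] at *
            omega
          · rw [if_neg (fun hh' => h1 (hmu.mp hh')), if_neg (fun hh' => h2 (hmr.mp hh'))]
            rw [if_neg h1, if_neg h2] at hlen
            simp only [List.length_cons] at *
            omega
        · intro hmem
          have h1 : C.u ∈ s'' := by
            rcases List.mem_cons.mp hmem with hh' | hh'
            · exact absurd hh'.symm hvu
            · exact hh'
          obtain ⟨A, B, hAB, hAne⟩ := hdu h1
          exact ⟨v :: A, B, by rw [hAB]; rfl, by simp⟩
        · intro hmem
          have h1 : C.r ∈ s'' := by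
            rcases List.mem_cons.mp hmem with hh' | hh'
            · exact absurd hh'.symm hvr
            · exact hh'
          obtain ⟨A, B, hAB, hAne⟩ := hdr h1
          exact ⟨v :: A, B, by rw [hAB]; rfl, by simp⟩
        · intro hmem1 hmem2
          have h1 : C.u ∈ s'' := by
            rcases List.mem_cons.mp hmem1 with hh' | hh'
            · exact absurd hh'.symm hvu
            · exact hh'
          have h2 : C.r ∈ s'' := by
            rcases List.mem_cons.mp hmem2 with hh' | hh'
            · exact absurd hh'.symm hvr
            · exact hh'
          obtain ⟨A, D, B, hAB, hAne, hDne⟩ := hdur h1 h2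
          exact ⟨v :: A, D, B, by rw [hAB]; rfl, by simp, hDne⟩
        · intro hmem
          have h1 : C.u ∈ s'' := by
            rcases List.mem_cons.mp hmem with hh' | hh'
            · exact absurd hh'.symm hvu
            · exact hh'
          exact List.mem_cons_of_mem _ (hua h1)
        · intro hmem
          have h1 : C.r ∈ s'' := by
            rcases List.mem_cons.mp hmem with hh' | hh'
            · exact absurd hh'.symm hvr
            · exact hh'
          exact List.mem_cons_of_mem _ (hrp h1)

end Cfg

section Surgery

lemma aux_pair_eq {e : ℕ × ℕ} {a b : ℕ} (h1 : e.1 = a) (h2 : e.2 = b) : e = (a, b) := by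
  rw [← h1, ← h2]

lemma updown_bound {X : Type} (N : Net X) (x y n : ℕ)
    (hn2 : ∀ l, N.IsUpDownPath x y l → n + 1 ≤ l.length)
    (P Q : List ℕ) (hPc : List.Chain' N.Edge P) (hQc : List.Chain' N.Edge Q)
    (hPne : P ≠ []) (hQne : Q ≠ []) (hh : P.head? = Q.head?)
    (hPl : P.getLast? = some x) (hQl : Q.getLast? = some y) :
    n + 2 ≤ P.length + Q.length := by
  have hpath : N.IsUpDownPath x y (P.reverse ++ Q.tail) :=
    ⟨P, Q, ⟨hPne, hPc⟩, ⟨hQne, hQc⟩, hh, hPl, hQl, rfl⟩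
  have h1 := hn2 _ hpath
  rw [List.length_append, List.length_reverse, List.length_tail] at h1
  have hq1 : 1 ≤ Q.length := List.length_pos_iff.mpr hQne
  omega

lemma aux_leg_not_mem {X : Type} (M : Net X) (z x : ℕ) (s : List ℕ)
    (hc : List.Chain' M.Edge s) (hlast : s.getLast? = some x) (hzx : z ≠ x)
    (hnoout : ∀ q, ¬ M.Edge z q) : z ∉ s := by
  intro hz
  rcases aux_chain_succ s hc z hz with ⟨q, hq⟩ | h
  · exact hnoout q hq
  · have h2 : some x = some z := hlast.symm.trans h
    exact hzx (Option.some.injEq x z ▸ h2 : x = z).symm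

lemma aux_suffix {R : ℕ → ℕ → Prop} (A B : List ℕ) (z x : ℕ)
    (hc : List.Chain' R (A ++ z :: B)) (hl : (A ++ z :: B).getLast? = some x) :
    List.Chain' R (z :: B) ∧ (z :: B).getLast? = some x ∧
      (z :: B).length + A.length = (A ++ z :: B).length := by
  refine ⟨(List.isChain_append.mp hc).2.1, ?_, ?_⟩
  · rw [← aux_getLast?_append_right A (z :: B) (by simp)]
    exact hl
  · rw [List.length_append]
    omega

lemma aux_splice {R : ℕ → ℕ → Prop} (A D B : List ℕ) (u r : ℕ) (hur : R u r)
    (hc : List.Chain' R (A ++ u :: D ++ r :: B)) :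
    List.Chain' R (A ++ u :: r :: B) ∧
      (A ++ u :: r :: B).length + D.length = (A ++ u :: D ++ r :: B).length ∧
      (A ++ u :: r :: B).head? = (A ++ u :: D ++ r :: B).head? ∧
      (A ++ u :: r :: B).getLast? = (A ++ u :: D ++ r :: B).getLast? := by
  have h1 : A ++ u :: D ++ r :: B = (A ++ [u]) ++ (D ++ r :: B) := by simp
  have h2 : A ++ u :: r :: B = (A ++ [u]) ++ (r :: B) := by simp
  rw [h1] at hc
  obtain ⟨c1, c2, c3⟩ := List.isChain_append.mp hc
  have c2' : List.Chain' R (r :: B) := (List.isChain_append.mp c2).2.1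
  refine ⟨?_, ?_, ?_, ?_⟩
  · rw [h2]
    refine List.isChain_append.mpr ⟨c1, c2', ?_⟩
    intro xx hxx yy hyy
    rw [aux_getLast?_append_right A [u] (by simp)] at hxx
    simp only [List.getLast?_singleton, Option.mem_def, Option.some.injEq] at hxx
    simp only [List.head?_cons, Option.mem_def, Option.some.injEq] at hyy
    rw [← hxx, ← hyy]
    exact hur
  · rw [h2, h1]
    simp only [List.length_append, List.length_cons, List.length_singleton,
      List.length_nil]
    omega
  · rw [h2, h1]
    rw [aux_head?_append_left (A ++ [u]) (r :: B) (by simp)]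
    rw [aux_head?_append_left (A ++ [u]) (D ++ r :: B) (by simp)]
  · rw [h2, h1]
    rw [aux_getLast?_append_right (A ++ [u]) (r :: B) (by simp)]
    rw [aux_getLast?_append_right (A ++ [u]) (D ++ r :: B) (by simp)]
    rw [aux_getLast?_append_right D (r :: B) (by simp)]

end Surgery

namespace Net

variable {X : Type}

lemma out_singleton (N : Net X) {v : ℕ} (h : N.outdeg v = 1) :
    ∃ w, N.Edge v w ∧ ∀ z, N.Edge v z → z = w := by
  obtain ⟨w, hw⟩ := N.exists_out (le_of_eq h.symm)
  exact ⟨w, hw, fun z hz => N.out_unique h hz hw⟩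

lemma in_singleton (N : Net X) {v : ℕ} (h : N.indeg v = 1) :
    ∃ w, N.Edge w v ∧ ∀ z, N.Edge z v → z = w := by
  obtain ⟨w, hw⟩ := N.exists_in (le_of_eq h.symm)
  exact ⟨w, hw, fun z hz => N.in_unique h hz hw⟩

lemma out_other' (N : Net X) {v s : ℕ} (h : N.outdeg v = 2) (hs : N.Edge v s) :
    ∃ t, t ≠ s ∧ N.Edge v t ∧ ∀ z, N.Edge v z → z = s ∨ z = t := by
  obtain ⟨f, hf, hfne, hall⟩ := aux_other_of_two h (Finset.mem_filter.mpr ⟨hs, rfl⟩)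
  rw [Finset.mem_filter] at hf
  have h1 : f = (v, f.2) := by rw [← hf.2]
  refine ⟨f.2, ?_, by rw [h1] at hf; exact hf.1, ?_⟩
  · intro hq
    apply hfne
    rw [h1, hq]
  · intro z hz
    rcases hall (v, z) (Finset.mem_filter.mpr ⟨hz, rfl⟩) with hh | hh
    · exact Or.inl (congrArg Prod.snd hh)
    · exact Or.inr (congrArg Prod.snd hh)

lemma in_other' (N : Net X) {v s : ℕ} (h : N.indeg v = 2) (hs : N.Edge s v) :
    ∃ t, t ≠ s ∧ N.Edge t v ∧ ∀ z, N.Edge z v → z = s ∨ z = t := by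
  obtain ⟨f, hf, hfne, hall⟩ := aux_other_of_two h (Finset.mem_filter.mpr ⟨hs, rfl⟩)
  rw [Finset.mem_filter] at hf
  have h1 : f = (f.1, v) := by rw [← hf.2]
  refine ⟨f.1, ?_, by rw [h1] at hf; exact hf.1, ?_⟩
  · intro hq
    apply hfne
    rw [h1, hq]
  · intro z hz
    rcases hall (z, v) (Finset.mem_filter.mpr ⟨hz, rfl⟩) with hh | hh
    · exact Or.inl (congrArg Prod.fst hh)
    · exact Or.inr (congrArg Prod.fst hh)

end Net

namespace Cfg

variable {X : Type} (C : Cfg X)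

/-- Cut a lifted leg at `r` (strong bound: the prefix absorbs all insertions). -/
lemma cut_leg_r (P' s : List ℕ) (x : ℕ)
    (hc : List.Chain' C.N.Edge P') (hlx : P'.getLast? = some x)
    (hlen : P'.length = s.length + (if C.u ∈ P' then 1 else 0) +
      (if C.r ∈ P' then 1 else 0))
    (hdr : C.r ∈ P' → ∃ A B, P' = A ++ C.r :: B ∧ A ≠ [])
    (hdur : C.u ∈ P' → C.r ∈ P' →
      ∃ A D B, P' = A ++ C.u :: D ++ C.r :: B ∧ A ≠ [] ∧ D ≠ [])
    (hr : C.r ∈ P') :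
    ∃ B1, List.Chain' C.N.Edge (C.r :: B1) ∧ (C.r :: B1).getLast? = some x ∧
      (C.r :: B1).length ≤ s.length := by
  by_cases hu : C.u ∈ P'
  · obtain ⟨A, D, B, hdec, hAne, hDne⟩ := hdur hu hr
    rw [if_pos hu, if_pos hr] at hlen
    have hdec' : P' = (A ++ C.u :: D) ++ C.r :: B := by rw [hdec]; try simp
    rw [hdec'] at hc hlx hlen
    obtain ⟨hc1, hl1, hlen1⟩ := aux_suffix _ _ _ _ hc hlx
    refine ⟨B, hc1, hl1, ?_⟩
    have h2 := List.length_pos_iff.mpr hAne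
    have h3 := List.length_pos_iff.mpr hDne
    simp only [List.length_append, List.length_cons] at hlen1 hlen ⊢
    omega
  · obtain ⟨A, B, hdec, hAne⟩ := hdr hr
    rw [if_pos hr, if_neg hu] at hlen
    rw [hdec] at hc hlx hlen
    obtain ⟨hc1, hl1, hlen1⟩ := aux_suffix _ _ _ _ hc hlx
    refine ⟨B, hc1, hl1, ?_⟩
    have h2 := List.length_pos_iff.mpr hAne
    simp only [List.length_append, List.length_cons] at hlen1 hlen ⊢
    omega

/-- Cut a lifted leg at `u`. -/
lemma cut_leg_u (P' s : List ℕ) (x : ℕ)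
    (hc : List.Chain' C.N.Edge P') (hlx : P'.getLast? = some x)
    (hlen : P'.length = s.length + (if C.u ∈ P' then 1 else 0) +
      (if C.r ∈ P' then 1 else 0))
    (hdu : C.u ∈ P' → ∃ A B, P' = A ++ C.u :: B ∧ A ≠ [])
    (hu : C.u ∈ P') :
    ∃ B1, List.Chain' C.N.Edge (C.u :: B1) ∧ (C.u :: B1).getLast? = some x ∧
      (C.u :: B1).length ≤ s.length + 1 ∧
      (C.r ∉ P' → (C.u :: B1).length ≤ s.length) := by
  obtain ⟨A, B, hdec, hAne⟩ := hdu hu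
  rw [if_pos hu] at hlen
  by_cases hr : C.r ∈ P'
  · rw [if_pos hr] at hlen
    rw [hdec] at hc hlx hlen
    obtain ⟨hc1, hl1, hlen1⟩ := aux_suffix _ _ _ _ hc hlx
    refine ⟨B, hc1, hl1, ?_, fun hh => absurd hr hh⟩
    have h2 := List.length_pos_iff.mpr hAne
    simp only [List.length_append, List.length_cons] at hlen1 hlen ⊢
    omega
  · rw [if_neg hr] at hlen
    rw [hdec] at hc hlx hlen
    obtain ⟨hc1, hl1, hlen1⟩ := aux_suffix _ _ _ _ hc hlx
    refine ⟨B, hc1, hl1, ?_, fun _ => ?_⟩ <;>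
    · have h2 := List.length_pos_iff.mpr hAne
      simp only [List.length_append, List.length_cons] at hlen1 hlen ⊢
      omega

/-- Shortcut a leg containing both `u` and `r` using the edge `(u,r)`. -/
lemma cut_leg_splice (P' s : List ℕ) (x : ℕ)
    (hc : List.Chain' C.N.Edge P') (hlx : P'.getLast? = some x)
    (hlen : P'.length = s.length + (if C.u ∈ P' then 1 else 0) +
      (if C.r ∈ P' then 1 else 0))
    (hdur : C.u ∈ P' → C.r ∈ P' →
      ∃ A D B, P' = A ++ C.u :: D ++ C.r :: B ∧ A ≠ [] ∧ D ≠ [])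
    (hu : C.u ∈ P') (hr : C.r ∈ P') :
    ∃ P'', List.Chain' C.N.Edge P'' ∧ P''.getLast? = some x ∧
      P''.head? = P'.head? ∧ P'' ≠ [] ∧ P''.length ≤ s.length + 1 := by
  obtain ⟨A, D, B, hdec, hAne, hDne⟩ := hdur hu hr
  rw [if_pos hu, if_pos hr] at hlen
  rw [hdec] at hc hlx hlen ⊢
  obtain ⟨hc2, hlen2, hh2, hl2⟩ := aux_splice A D B C.u C.r C.hur hc
  refine ⟨A ++ C.u :: C.r :: B, hc2, by rw [hl2]; exact hlx, hh2, by simp, ?_⟩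
  have h3 := List.length_pos_iff.mpr hDne
  simp only [List.length_append, List.length_cons] at hlen2 hlen ⊢
  omega

/-- Cut a lifted leg at `r` and prepend `u` via the edge `(u,r)`. -/
lemma cut_leg_prepend (Q' s : List ℕ) (y : ℕ)
    (hc : List.Chain' C.N.Edge Q') (hly : Q'.getLast? = some y)
    (hlen : Q'.length = s.length + (if C.u ∈ Q' then 1 else 0) +
      (if C.r ∈ Q' then 1 else 0))
    (hdr : C.r ∈ Q' → ∃ A B, Q' = A ++ C.r :: B ∧ A ≠ [])
    (hr : C.r ∈ Q') (hu : C.u ∉ Q') :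
    ∃ B2, List.Chain' C.N.Edge (C.u :: C.r :: B2) ∧
      (C.u :: C.r :: B2).getLast? = some y ∧
      (C.u :: C.r :: B2).length ≤ s.length + 1 := by
  obtain ⟨A, B, hdec, hAne⟩ := hdr hr
  rw [if_pos hr, if_neg hu] at hlen
  rw [hdec] at hc hly hlen
  obtain ⟨hc1, hl1, hlen1⟩ := aux_suffix _ _ _ _ hc hly
  refine ⟨B, ?_, ?_, ?_⟩
  · refine List.isChain_cons_cons.mpr ?_
    exact ⟨C.hur, hc1⟩
  · rw [show C.u :: C.r :: B = [C.u] ++ (C.r :: B) from rfl,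
      aux_getLast?_append_right _ _ (by simp)]
    exact hl1
  · have h2 := List.length_pos_iff.mpr hAne
    simp only [List.length_append, List.length_cons] at hlen1 hlen ⊢
    omega

end Cfg

/-- In a binary tree-child network, deleting a single reticulation edge
(and cleaning up) decreases the shortest up-down distance between two leaves by at most 1. -/
theorem maxSubnet_distance_drop_le_one {X : Type} (N M : Net X) (hN : N.TreeChild)
    (h : N.IsMaxSubnet M) (x y : ℕ) (hx : N.IsLeaf x) (hy : N.IsLeaf y)
    (n m : ℕ) (hn : N.IsUpDownDist x y n) (hm : M.IsUpDownDist x y m) :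
    n ≤ m + 1 := by
  obtain ⟨e, ⟨heE, hret⟩, hclean⟩ := h
  obtain ⟨u₀, r₀⟩ := e
  obtain ⟨⟨hclosure, hacyc, hroot, htypes, hlab, hlabinj⟩, hTC⟩ := hN
  have hrV : r₀ ∈ N.verts := hret.1
  have hrin : N.indeg r₀ = 2 := hret.2.1
  have hrout : N.outdeg r₀ = 1 := hret.2.2
  have heE' : N.Edge u₀ r₀ := heE
  obtain ⟨c₀, hrc, houtr⟩ := N.out_singleton hrout
  obtain ⟨p₀, hpune, hpr, hinr⟩ := N.in_other' hrin heE'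
  have huV : u₀ ∈ N.verts := (hclosure _ heE').1
  have hunotleaf : ¬ N.IsLeaf u₀ := by
    intro hl
    have h1 := N.outdeg_pos heE'
    rw [hl.2.2] at h1
    omega
  have hrTL : ¬ (N.IsTreeNode r₀ ∨ N.IsLeaf r₀) := by
    rintro (hh | hh) <;>
      exact absurd (hrin.symm.trans hh.2.1) (by norm_num)
  have hutree : N.IsTreeNode u₀ := by
    have hone : ¬ N.outdeg u₀ = 1 := by
      intro h1
      obtain ⟨ch, hch, hchTL⟩ := hTC u₀ huV hunotleaf
      have hcr : ch = r₀ := N.out_unique h1 hch heE'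
      rw [hcr] at hchTL
      exact hrTL hchTL
    rcases htypes u₀ huV with hh | hh | hh | hh
    · exact (hone hh.2.2).elim
    · exact absurd hh hunotleaf
    · exact hh
    · exact (hone hh.2.2).elim
  obtain ⟨a₀, hau, hinu⟩ := N.in_singleton hutree.2.1
  obtain ⟨b₀, hbne, hub, houtu⟩ := N.out_other' hutree.2.2 heE'
  have hbTL : N.IsTreeNode b₀ ∨ N.IsLeaf b₀ := by
    obtain ⟨ch, hch, hchTL⟩ := hTC u₀ huV hunotleaf
    rcases houtu ch hch with rfl | rfl
    · exact (hrTL hchTL).elim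
    · exact hchTL
  have hinb : ∀ z, N.Edge z b₀ → z = u₀ := by
    intro z hz
    rcases hbTL with hh | hh
    · exact N.in_unique hh.2.1 hz hub
    · exact N.in_unique hh.2.1 hz hub
  have hrnotleaf : ¬ N.IsLeaf r₀ := fun hh => hrTL (Or.inr hh)
  have hcTL : N.IsTreeNode c₀ ∨ N.IsLeaf c₀ := by
    obtain ⟨ch, hch, hchTL⟩ := hTC r₀ hrV hrnotleaf
    rw [houtr ch hch] at hchTL
    exact hchTL
  have hinc : ∀ z, N.Edge z c₀ → z = r₀ := by
    intro z hz
    rcases hcTL with hh | hh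
    · exact N.in_unique hh.2.1 hz hrc
    · exact N.in_unique hh.2.1 hz hrc
  let Cc : Cfg X := ⟨N, u₀, r₀, p₀, c₀, a₀, b₀, heE', hpr, hrc, hau, hub,
    hinr, houtr, hinu, houtu, hinb, hinc, hpune, hacyc, hclosure, htypes, hlab⟩
  have hM3 : M = Cc.M3 := Cc.cleansTo_M3 hclean
  subst hM3
  -- interface facts for the lifted network
  have htri : ∀ e ∈ Cc.M3.edges, e = (Cc.a, Cc.b) ∨ e = (Cc.p, Cc.c) ∨ e ∈ Cc.N.edges := by
    intro e he
    rcases (Cc.mem_M3 e).1 he with hh | hh | hh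
    · exact Or.inl hh
    · exact Or.inr (Or.inl hh)
    · exact Or.inr (Or.inr hh.1)
  have hcomp : ∀ e ∈ Cc.M3.edges,
      e.1 ≠ Cc.u ∧ e.2 ≠ Cc.u ∧ e.1 ≠ Cc.r ∧ e.2 ≠ Cc.r := by
    intro e he
    rcases (Cc.mem_M3 e).1 he with rfl | rfl | hh
    · exact ⟨Cc.hau_ne, Cc.hbu, Cc.har, Cc.hbr⟩
    · exact ⟨Cc.hpu, Cc.hcu, Cc.hpr_ne, Cc.hcr⟩
    · exact ⟨hh.2.1, hh.2.2.1, hh.2.2.2.1, hh.2.2.2.2⟩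
  have hnoU : ∀ q, ¬ Cc.M3.Edge Cc.u q := fun q hq => (hcomp _ hq).1 rfl
  have hnoR : ∀ q, ¬ Cc.M3.Edge Cc.r q := fun q hq => (hcomp _ hq).2.2.1 rfl
  have hux : Cc.u ≠ x := by
    intro hh
    have h1 := N.outdeg_pos hub
    rw [(show Cc.u = u₀ from rfl)] at hh
    rw [hh, hx.2.2] at h1
    omega
  have huy : Cc.u ≠ y := by
    intro hh
    have h1 := N.outdeg_pos hub
    rw [(show Cc.u = u₀ from rfl)] at hh
    rw [hh, hy.2.2] at h1
    omega
  have hrx : Cc.r ≠ x := by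
    intro hh
    have h1 := N.outdeg_pos hrc
    rw [(show Cc.r = r₀ from rfl)] at hh
    rw [hh, hx.2.2] at h1
    omega
  have hry : Cc.r ≠ y := by
    intro hh
    have h1 := N.outdeg_pos hrc
    rw [(show Cc.r = r₀ from rfl)] at hh
    rw [hh, hy.2.2] at h1
    omega
  -- decompose the minimal up-down path of the subnetwork
  obtain ⟨⟨l, hlpath, hllen⟩, _⟩ := hm
  obtain ⟨P, Q, ⟨hPne, hPc⟩, ⟨hQne, hQc⟩, hhead, hPl, hQl, hleq⟩ := hlpath
  have hlen2 : P.length + Q.length = m + 2 := by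
    have h1 := hllen
    rw [hleq, List.length_append, List.length_reverse, List.length_tail] at h1
    have h2 := List.length_pos_iff.mpr hQne
    omega
  have hPu : Cc.u ∉ P := aux_leg_not_mem Cc.M3 Cc.u x P hPc hPl hux hnoU
  have hPr : Cc.r ∉ P := aux_leg_not_mem Cc.M3 Cc.r x P hPc hPl hrx hnoR
  have hQu : Cc.u ∉ Q := aux_leg_not_mem Cc.M3 Cc.u y Q hQc hQl huy hnoU
  have hQr : Cc.r ∉ Q := aux_leg_not_mem Cc.M3 Cc.r y Q hQc hQl hry hnoR
  have hmac := Cc.macyc Cc.M3 htri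
  obtain ⟨P', hPc', hPh', hPl', hPlen, hPdu, hPdr, hPdur, _, _⟩ :=
    Cc.lift_leg Cc.M3 htri P hPc (aux_chain_nodup hmac P hPc) hPu hPr
  obtain ⟨Q', hQc', hQh', hQl', hQlen, hQdu, hQdr, hQdur, _, _⟩ :=
    Cc.lift_leg Cc.M3 htri Q hQc (aux_chain_nodup hmac Q hQc) hQu hQr
  have hPlx : P'.getLast? = some x := hPl'.trans hPl
  have hQly : Q'.getLast? = some y := hQl'.trans hQl
  have hPne' : P' ≠ [] := by
    intro hh
    rw [hh, hPl] at hPl'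
    simp at hPl'
  have hQne' : Q' ≠ [] := by
    intro hh
    rw [hh, hQl] at hQl'
    simp at hQl'
  have hP'Q' : P'.head? = Q'.head? := hPh'.trans (hhead.trans hQh'.symm)
  -- the case analysis
  by_cases hrr : Cc.r ∈ P' ∧ Cc.r ∈ Q'
  · obtain ⟨B1, hc1, hl1, hb1⟩ := Cc.cut_leg_r P' P x hPc' hPlx hPlen hPdr hPdur hrr.1
    obtain ⟨B2, hc2, hl2, hb2⟩ := Cc.cut_leg_r Q' Q y hQc' hQly hQlen hQdr hQdur hrr.2
    have hb := updown_bound N x y n hn.2 _ _ hc1 hc2 (by simp) (by simp) rfl hl1 hl2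
    omega
  · by_cases huu : Cc.u ∈ P' ∧ Cc.u ∈ Q'
    · obtain ⟨B1, hc1, hl1, hb1, hb1'⟩ := Cc.cut_leg_u P' P x hPc' hPlx hPlen hPdu huu.1
      obtain ⟨B2, hc2, hl2, hb2, hb2'⟩ := Cc.cut_leg_u Q' Q y hQc' hQly hQlen hQdu huu.2
      have hb := updown_bound N x y n hn.2 _ _ hc1 hc2 (by simp) (by simp) rfl hl1 hl2
      by_cases hr1 : Cc.r ∈ P'
      · have hr2 : Cc.r ∉ Q' := fun hh => hrr ⟨hr1, hh⟩
        have := hb2' hr2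
        omega
      · have := hb1' hr1
        omega
    · by_cases hPboth : Cc.u ∈ P' ∧ Cc.r ∈ P'
      · -- splice P'; Q' is clean
        have huQ : Cc.u ∉ Q' := fun hh => huu ⟨hPboth.1, hh⟩
        have hrQ' : Cc.r ∉ Q' := fun hh => hrr ⟨hPboth.2, hh⟩
        rw [if_neg huQ, if_neg hrQ'] at hQlen
        obtain ⟨P'', hc1, hl1, hh1, hne1, hb1⟩ :=
          Cc.cut_leg_splice P' P x hPc' hPlx hPlen hPdur hPboth.1 hPboth.2
        have hb := updown_bound N x y n hn.2 _ _ hc1 hQc' hne1 hQne'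
          (hh1.trans hP'Q') hl1 hQly
        omega
      · by_cases hQboth : Cc.u ∈ Q' ∧ Cc.r ∈ Q'
        · have huP : Cc.u ∉ P' := fun hh => huu ⟨hh, hQboth.1⟩
          have hrP' : Cc.r ∉ P' := fun hh => hrr ⟨hh, hQboth.2⟩
          rw [if_neg huP, if_neg hrP'] at hPlen
          obtain ⟨Q'', hc2, hl2, hh2, hne2, hb2⟩ :=
            Cc.cut_leg_splice Q' Q y hQc' hQly hQlen hQdur hQboth.1 hQboth.2
          have hb := updown_bound N x y n hn.2 _ _ hPc' hc2 hPne' hne2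
            (hP'Q'.trans hh2.symm) hPlx hl2
          omega
        · by_cases hsplit : Cc.u ∈ P' ∧ Cc.r ∈ Q'
          · have hrP' : Cc.r ∉ P' := fun hh => hPboth ⟨hsplit.1, hh⟩
            have huQ : Cc.u ∉ Q' := fun hh => huu ⟨hsplit.1, hh⟩
            obtain ⟨B1, hc1, hl1, _, hb1'⟩ :=
              Cc.cut_leg_u P' P x hPc' hPlx hPlen hPdu hsplit.1
            have hb1 := hb1' hrP'
            obtain ⟨B2, hc2, hl2, hb2⟩ :=
              Cc.cut_leg_prepend Q' Q y hQc' hQly hQlen hQdr hsplit.2 huQ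
            have hb := updown_bound N x y n hn.2 _ _ hc1 hc2 (by simp) (by simp) rfl hl1 hl2
            omega
          · by_cases hsplit2 : Cc.r ∈ P' ∧ Cc.u ∈ Q'
            · have huP : Cc.u ∉ P' := fun hh => huu ⟨hh, hsplit2.2⟩
              have hrQ' : Cc.r ∉ Q' := fun hh => hrr ⟨hsplit2.1, hh⟩
              obtain ⟨B1, hc1, hl1, hb1⟩ :=
                Cc.cut_leg_prepend P' P x hPc' hPlx hPlen hPdr hsplit2.1 huP
              obtain ⟨B2, hc2, hl2, _, hb2'⟩ :=
                Cc.cut_leg_u Q' Q y hQc' hQly hQlen hQdu hsplit2.2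
              have hb2 := hb2' hrQ'
              have hb := updown_bound N x y n hn.2 _ _ hc1 hc2 (by simp) (by simp) rfl hl1 hl2
              omega
            · -- at most one insertion in total
              have hb := updown_bound N x y n hn.2 P' Q' hPc' hQc' hPne' hQne'
                hP'Q' hPlx hQly
              set iuP := (if Cc.u ∈ P' then 1 else 0) with hiuP
              set irP := (if Cc.r ∈ P' then 1 else 0) with hirP
              set iuQ := (if Cc.u ∈ Q' then 1 else 0) with hiuQ
              set irQ := (if Cc.r ∈ Q' then 1 else 0) with hirQ
              have a1 : iuP + iuQ ≤ 1 := by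
                rw [hiuP, hiuQ]
                by_cases h1 : Cc.u ∈ P'
                · by_cases h3 : Cc.u ∈ Q'
                  · exact absurd ⟨h1, h3⟩ huu
                  · simp [h1, h3]
                · by_cases h3 : Cc.u ∈ Q' <;> simp [h1, h3]
              have a2 : irP + irQ ≤ 1 := by
                rw [hirP, hirQ]
                by_cases h1 : Cc.r ∈ P'
                · by_cases h3 : Cc.r ∈ Q'
                  · exact absurd ⟨h1, h3⟩ hrr
                  · simp [h1, h3]
                · by_cases h3 : Cc.r ∈ Q' <;> simp [h1, h3]
              have a3 : iuP + irP ≤ 1 := by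
                rw [hiuP, hirP]
                by_cases h1 : Cc.u ∈ P'
                · by_cases h3 : Cc.r ∈ P'
                  · exact absurd ⟨h1, h3⟩ hPboth
                  · simp [h1, h3]
                · by_cases h3 : Cc.r ∈ P' <;> simp [h1, h3]
              have a4 : iuQ + irQ ≤ 1 := by
                rw [hiuQ, hirQ]
                by_cases h1 : Cc.u ∈ Q'
                · by_cases h3 : Cc.r ∈ Q'
                  · exact absurd ⟨h1, h3⟩ hQboth
                  · simp [h1, h3]
                · by_cases h3 : Cc.r ∈ Q' <;> simp [h1, h3]
              have a5 : iuP + irQ ≤ 1 := by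
                rw [hiuP, hirQ]
                by_cases h1 : Cc.u ∈ P'
                · by_cases h3 : Cc.r ∈ Q'
                  · exact absurd ⟨h1, h3⟩ hsplit
                  · simp [h1, h3]
                · by_cases h3 : Cc.r ∈ Q' <;> simp [h1, h3]
              have a6 : irP + iuQ ≤ 1 := by
                rw [hirP, hiuQ]
                by_cases h1 : Cc.r ∈ P'
                · by_cases h3 : Cc.u ∈ Q'
                  · exact absurd ⟨h1, h3⟩ hsplit2
                  · simp [h1, h3]
                · by_cases h3 : Cc.u ∈ Q' <;> simp [h1, h3]
              omega
end
end

section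
/- Let N be a binary tree-child network with leaves x and y such that d_N(x,y) = 4. Then there are at most two distinct shortest up-down paths between x and y in N. -/
open scoped Classical
noncomputable section

section Aux

variable {X : Type}

lemma leaf_no_out {N : Net X} {z v : ℕ} (hz : N.IsLeaf z) (h : N.Edge z v) : False := by
  have h0 : N.outdeg z = 0 := hz.2.2
  unfold Net.outdeg at h0
  rw [Finset.card_eq_zero] at h0
  have : (z, v) ∈ N.edges.filter (fun e => e.1 = z) := by
    simp [Finset.mem_filter]
    exact h
  rw [h0] at this
  simp at this

lemma parent_unique {N : Net X} {z u u' : ℕ} (h1 : N.indeg z = 1)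
    (hu : N.Edge u z) (hu' : N.Edge u' z) : u = u' := by
  unfold Net.indeg at h1
  rw [Finset.card_eq_one] at h1
  obtain ⟨e, he⟩ := h1
  have m1 : (u, z) ∈ N.edges.filter (fun e => e.2 = z) := by
    simp [Finset.mem_filter]; exact hu
  have m2 : (u', z) ∈ N.edges.filter (fun e => e.2 = z) := by
    simp [Finset.mem_filter]; exact hu'
  rw [he, Finset.mem_singleton] at m1 m2
  exact congrArg Prod.fst (m1.trans m2.symm)

lemma two_le_outdeg {N : Net X} {v a b : ℕ} (ha : N.Edge v a) (hb : N.Edge v b)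
    (hab : a ≠ b) : 2 ≤ N.outdeg v := by
  have hsub : ({(v, a), (v, b)} : Finset (ℕ × ℕ)) ⊆ N.edges.filter (fun e => e.1 = v) := by
    intro e he
    simp at he
    rcases he with rfl | rfl <;> simp [Finset.mem_filter] <;> assumption
  have hcard : ({(v, a), (v, b)} : Finset (ℕ × ℕ)).card = 2 := by
    rw [Finset.card_insert_of_notMem (by simp [hab]), Finset.card_singleton]
  calc 2 = ({(v, a), (v, b)} : Finset (ℕ × ℕ)).card := hcard.symm
    _ ≤ _ := Finset.card_le_card hsub

lemma three_le_outdeg {N : Net X} {v a b c : ℕ} (ha : N.Edge v a) (hb : N.Edge v b)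
    (hc : N.Edge v c) (hab : a ≠ b) (hac : a ≠ c) (hbc : b ≠ c) : 3 ≤ N.outdeg v := by
  have hsub : ({(v, a), (v, b), (v, c)} : Finset (ℕ × ℕ)) ⊆ N.edges.filter (fun e => e.1 = v) := by
    intro e he
    simp at he
    rcases he with rfl | rfl | rfl <;> simp [Finset.mem_filter] <;> assumption
  have hcard : ({(v, a), (v, b), (v, c)} : Finset (ℕ × ℕ)).card = 3 := by
    rw [Finset.card_insert_of_notMem (by simp [hab, hac]),
      Finset.card_insert_of_notMem (by simp [hbc]), Finset.card_singleton]
  calc 3 = ({(v, a), (v, b), (v, c)} : Finset (ℕ × ℕ)).card := hcard.symm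
    _ ≤ _ := Finset.card_le_card hsub

lemma two_le_indeg {N : Net X} {v a b : ℕ} (ha : N.Edge a v) (hb : N.Edge b v)
    (hab : a ≠ b) : 2 ≤ N.indeg v := by
  have hsub : ({(a, v), (b, v)} : Finset (ℕ × ℕ)) ⊆ N.edges.filter (fun e => e.2 = v) := by
    intro e he
    simp at he
    rcases he with rfl | rfl <;> simp [Finset.mem_filter] <;> assumption
  have hcard : ({(a, v), (b, v)} : Finset (ℕ × ℕ)).card = 2 := by
    rw [Finset.card_insert_of_notMem (by simp [hab]), Finset.card_singleton]
  calc 2 = ({(a, v), (b, v)} : Finset (ℕ × ℕ)).card := hcard.symm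
    _ ≤ _ := Finset.card_le_card hsub

lemma three_le_indeg {N : Net X} {v a b c : ℕ} (ha : N.Edge a v) (hb : N.Edge b v)
    (hc : N.Edge c v) (hab : a ≠ b) (hac : a ≠ c) (hbc : b ≠ c) : 3 ≤ N.indeg v := by
  have hsub : ({(a, v), (b, v), (c, v)} : Finset (ℕ × ℕ)) ⊆ N.edges.filter (fun e => e.2 = v) := by
    intro e he
    simp at he
    rcases he with rfl | rfl | rfl <;> simp [Finset.mem_filter] <;> assumption
  have hcard : ({(a, v), (b, v), (c, v)} : Finset (ℕ × ℕ)).card = 3 := by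
    rw [Finset.card_insert_of_notMem (by simp [hab, hac]),
      Finset.card_insert_of_notMem (by simp [hbc]), Finset.card_singleton]
  calc 3 = ({(a, v), (b, v), (c, v)} : Finset (ℕ × ℕ)).card := hcard.symm
    _ ≤ _ := Finset.card_le_card hsub

lemma outdeg_le_two {N : Net X} (hnet : N.IsNetwork) {v : ℕ} (hv : v ∈ N.verts) :
    N.outdeg v ≤ 2 := by
  rcases hnet.2.2.2.1 v hv with h | h | h | h <;> rw [h.2.2] <;> norm_num

lemma retic_of_two_indeg {N : Net X} (hnet : N.IsNetwork) {v : ℕ} (hv : v ∈ N.verts)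
    (h2 : 2 ≤ N.indeg v) : N.indeg v = 2 ∧ N.outdeg v = 1 := by
  rcases hnet.2.2.2.1 v hv with h | h | h | h <;>
    first
      | (exact absurd h2 (by rw [h.2.1]; omega))
      | exact ⟨h.2.1, h.2.2⟩

/-- Configuration of the middle node of a shortest up-down path `[x, px, m, py, y]`. -/
def Cfg_s13 (N : Net X) (px py m : ℕ) : Prop :=
  (N.Edge px m ∧ N.Edge m py) ∨ (N.Edge m px ∧ N.Edge m py) ∨ (N.Edge m px ∧ N.Edge py m)

lemma shape {N : Net X} (hnet : N.IsNetwork) {x y : ℕ} (hx : N.IsLeaf x) (hy : N.IsLeaf y)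
    {l : List ℕ} (hl : N.IsUpDownPath x y l) (h5 : l.length = 5) :
    ∃ px m py, l = [x, px, m, py, y] ∧ N.Edge px x ∧ N.Edge py y ∧ Cfg_s13 N px py m := by
  obtain ⟨p, q, ⟨hpne, hpc⟩, ⟨hqne, hqc⟩, hhead, hplast, hqlast, rfl⟩ := hl
  have hq1 : 1 ≤ q.length := List.length_pos_iff.mpr hqne
  have hp1 : 1 ≤ p.length := List.length_pos_iff.mpr hpne
  have hlen : p.length + q.length = 6 := by
    rw [List.length_append, List.length_reverse, List.length_tail] at h5
    omega
  clear h5 hpne hqne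
  rcases p with _ | ⟨a0, _ | ⟨a1, _ | ⟨a2, _ | ⟨a3, _ | ⟨a4, pr⟩⟩⟩⟩⟩ <;>
    rcases q with _ | ⟨b0, _ | ⟨b1, _ | ⟨b2, _ | ⟨b3, _ | ⟨b4, qr⟩⟩⟩⟩⟩ <;>
    simp only [List.length_cons, List.length_nil] at hlen hq1 hp1 <;>
    first
      | omega
      | skip
  · -- |p| = 1, |q| = 5
    simp only [List.head?_cons, Option.some.injEq] at hhead
    simp only [List.getLast?_singleton, Option.some.injEq] at hplast
    subst hplast; subst hhead
    simp only [List.Chain', List.isChain_cons_cons] at hqc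
    exact (leaf_no_out hx hqc.1).elim
  · -- |p| = 2, |q| = 4
    simp only [List.head?_cons, Option.some.injEq] at hhead
    simp at hplast hqlast
    subst hplast; subst hqlast; subst hhead
    simp only [List.Chain', List.isChain_cons_cons, List.isChain_singleton, and_true] at hpc hqc
    exact ⟨a0, b1, b2, by simp, hpc, hqc.2.2, Or.inl ⟨hqc.1, hqc.2.1⟩⟩
  · -- |p| = 3, |q| = 3
    simp only [List.head?_cons, Option.some.injEq] at hhead
    simp at hplast hqlast
    subst hplast; subst hqlast; subst hhead
    simp only [List.Chain', List.isChain_cons_cons, List.isChain_singleton, and_true] at hpc hqc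
    exact ⟨a1, a0, b1, by simp, hpc.2, hqc.2, Or.inr (Or.inl ⟨hpc.1, hqc.1⟩)⟩
  · -- |p| = 4, |q| = 2
    simp only [List.head?_cons, Option.some.injEq] at hhead
    simp at hplast hqlast
    subst hplast; subst hqlast; subst hhead
    simp only [List.Chain', List.isChain_cons_cons, List.isChain_singleton, and_true] at hpc hqc
    exact ⟨a2, a1, a0, by simp, hpc.2.2, hqc, Or.inr (Or.inr ⟨hpc.2.1, hpc.1⟩)⟩
  · -- |p| = 5, |q| = 1
    simp only [List.head?_cons, Option.some.injEq] at hhead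
    simp only [List.getLast?_singleton, Option.some.injEq] at hqlast
    subst hqlast; subst hhead
    simp only [List.Chain', List.isChain_cons_cons] at hpc
    exact (leaf_no_out hy hpc.1).elim

lemma count {N : Net X} (hnet : N.IsNetwork) {x y px py : ℕ} (hx : N.IsLeaf x)
    (hy : N.IsLeaf y) (hpx : N.Edge px x) (hpy : N.Edge py y) {m1 m2 m3 : ℕ}
    (h1 : Cfg_s13 N px py m1) (h2 : Cfg_s13 N px py m2) (h3 : Cfg_s13 N px py m3)
    (d12 : m1 ≠ m2) (d13 : m1 ≠ m3) (d23 : m2 ≠ m3) : False := by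
  have hpxv : px ∈ N.verts := (hnet.1 _ hpx).1
  have hpyv : py ∈ N.verts := (hnet.1 _ hpy).1
  have hod_px : N.outdeg px ≤ 2 := outdeg_le_two hnet hpxv
  have hod_py : N.outdeg py ≤ 2 := outdeg_le_two hnet hpyv
  have acyc := hnet.2.1
  have keyAA : ∀ m m', (N.Edge px m ∧ N.Edge m py) → (N.Edge px m' ∧ N.Edge m' py) →
      m ≠ m' → False := by
    intro m m' h h' hne
    have hmx : m ≠ x := fun e => leaf_no_out hx (e ▸ h.2)
    have hmx' : m' ≠ x := fun e => leaf_no_out hx (e ▸ h'.2)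
    have := three_le_outdeg hpx h.1 h'.1 (Ne.symm hmx) (Ne.symm hmx') hne
    omega
  have keyCC : ∀ m m', (N.Edge m px ∧ N.Edge py m) → (N.Edge m' px ∧ N.Edge py m') →
      m ≠ m' → False := by
    intro m m' h h' hne
    have hmy : m ≠ y := fun e => leaf_no_out hy (e ▸ h.1)
    have hmy' : m' ≠ y := fun e => leaf_no_out hy (e ▸ h'.1)
    have := three_le_outdeg hpy h.2 h'.2 (Ne.symm hmy) (Ne.symm hmy') hne
    omega
  have keyAC : ∀ m m', (N.Edge px m ∧ N.Edge m py) → (N.Edge m' px ∧ N.Edge py m') → False := by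
    intro m m' h h'
    exact acyc px m h.1
      (Relation.ReflTransGen.head h.2
        (Relation.ReflTransGen.head h'.2 (Relation.ReflTransGen.single h'.1)))
  have keyBB : ∀ ma mb mc, (N.Edge ma px ∧ N.Edge ma py) → (N.Edge mb px ∧ N.Edge mb py) →
      ma ≠ mb → Cfg_s13 N px py mc → mc ≠ ma → mc ≠ mb → False := by
    intro ma mb mc hba hbb hne hc hca hcb
    have h2px := two_le_indeg hba.1 hbb.1 hne
    have h2py := two_le_indeg hba.2 hbb.2 hne
    obtain ⟨hipx, hopx⟩ := retic_of_two_indeg hnet hpxv h2px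
    obtain ⟨hipy, hopy⟩ := retic_of_two_indeg hnet hpyv h2py
    rcases hc with h | h | h
    · have hmx : mc ≠ x := fun e => leaf_no_out hx (e ▸ h.2)
      have := two_le_outdeg hpx h.1 (Ne.symm hmx)
      omega
    · have := three_le_indeg hba.1 hbb.1 h.1 hne (Ne.symm hca) (Ne.symm hcb)
      omega
    · have hmy : mc ≠ y := fun e => leaf_no_out hy (e ▸ h.1)
      have := two_le_outdeg hpy h.2 (Ne.symm hmy)
      omega
  rcases h1 with h1 | h1 | h1 <;> rcases h2 with h2 | h2 | h2 <;> rcases h3 with h3 | h3 | h3 <;>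
    first
      | exact keyAA _ _ h1 h2 d12
      | exact keyAA _ _ h1 h3 d13
      | exact keyAA _ _ h2 h3 d23
      | exact keyCC _ _ h1 h2 d12
      | exact keyCC _ _ h1 h3 d13
      | exact keyCC _ _ h2 h3 d23
      | exact keyAC _ _ h1 h2
      | exact keyAC _ _ h1 h3
      | exact keyAC _ _ h2 h3
      | exact keyAC _ _ h2 h1
      | exact keyAC _ _ h3 h1
      | exact keyAC _ _ h3 h2
      | exact keyBB _ _ _ h1 h2 d12 (Or.inl h3) d13.symm d23.symm
      | exact keyBB _ _ _ h1 h2 d12 (Or.inr (Or.inl h3)) d13.symm d23.symm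
      | exact keyBB _ _ _ h1 h2 d12 (Or.inr (Or.inr h3)) d13.symm d23.symm
      | exact keyBB _ _ _ h1 h3 d13 (Or.inl h2) d12.symm d23
      | exact keyBB _ _ _ h1 h3 d13 (Or.inr (Or.inl h2)) d12.symm d23
      | exact keyBB _ _ _ h1 h3 d13 (Or.inr (Or.inr h2)) d12.symm d23
      | exact keyBB _ _ _ h2 h3 d23 (Or.inl h1) d12 d13
      | exact keyBB _ _ _ h2 h3 d23 (Or.inr (Or.inl h1)) d12 d13
      | exact keyBB _ _ _ h2 h3 d23 (Or.inr (Or.inr h1)) d12 d13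

end Aux

/-- In a binary tree-child network with leaves `x, y` at up-down distance 4,
there are at most two distinct shortest up-down paths between `x` and `y`. -/
theorem at_most_two_shortest_updown_paths {X : Type} (N : Net X) (hN : N.TreeChild)
    (x y : ℕ) (hx : N.IsLeaf x) (hy : N.IsLeaf y) (hd : N.IsUpDownDist x y 4) :
    ∀ l₁ l₂ l₃ : List ℕ,
      (N.IsUpDownPath x y l₁ ∧ l₁.length = 5) →
      (N.IsUpDownPath x y l₂ ∧ l₂.length = 5) →
      (N.IsUpDownPath x y l₃ ∧ l₃.length = 5) →
      l₁ = l₂ ∨ l₁ = l₃ ∨ l₂ = l₃ := by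
  intro l₁ l₂ l₃ h1 h2 h3
  have hnet := hN.1
  obtain ⟨px1, m1, py1, hl1, hpx1, hpy1, hc1⟩ := shape hnet hx hy h1.1 h1.2
  obtain ⟨px2, m2, py2, hl2, hpx2, hpy2, hc2⟩ := shape hnet hx hy h2.1 h2.2
  obtain ⟨px3, m3, py3, hl3, hpx3, hpy3, hc3⟩ := shape hnet hx hy h3.1 h3.2
  have hpx21 : px2 = px1 := parent_unique hx.2.1 hpx2 hpx1
  have hpx31 : px3 = px1 := parent_unique hx.2.1 hpx3 hpx1
  have hpy21 : py2 = py1 := parent_unique hy.2.1 hpy2 hpy1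
  have hpy31 : py3 = py1 := parent_unique hy.2.1 hpy3 hpy1
  subst hpx21; subst hpx31; subst hpy21; subst hpy31
  by_contra hcon
  push_neg at hcon
  obtain ⟨h12, h13, h23⟩ := hcon
  have d12 : m1 ≠ m2 := fun e => h12 (by rw [hl1, hl2, e])
  have d13 : m1 ≠ m3 := fun e => h13 (by rw [hl1, hl3, e])
  have d23 : m2 ≠ m3 := fun e => h23 (by rw [hl2, hl3, e])
  exact count hnet hx hy hpx1 hpy1 hc1 hc2 hc3 d12 d13 d23
end
end
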